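/- arXiv:1106.2010 — 7 statements merged into one kernel-verified Lean document; each statement's English description precedes it below -/
import Mathlib

section
/- Contraction principle of Kahane (finite sign-sum form): Let X be a complex Banach space, p ∈ [1,∞), N ∈ ℕ, x_1,…,x_N ∈ X, and a_1,…,a_N, b_1,…,b_N ∈ ℂ with |a_j| ≤ |b_j| for j = 1,…,N. Then Σ_{ε ∈ {−1,1}^N} ‖Σ_{j=1}^N a_j ε_j x_j‖^p ≤ 2^p · Σ_{ε ∈ {−1,1}^N} ‖Σ_{j=1}^N b_j ε_j x_j‖^p. -/
open scoped BigOperators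
open Finset

private lemma rpow_convex_comb {p : ℝ} (hp : 1 ≤ p) {l A B : ℝ} (hl0 : 0 ≤ l) (hl1 : l ≤ 1)
    (hA : 0 ≤ A) (hB : 0 ≤ B) :
    (l * A + (1 - l) * B) ^ p ≤ l * A ^ p + (1 - l) * B ^ p := by
  have := (convexOn_rpow hp).2 (Set.mem_Ici.2 hA) (Set.mem_Ici.2 hB) hl0 (by linarith)
    (by ring : l + (1 - l) = 1)
  simpa [smul_eq_mul] using this

private lemma step_one {X : Type*} [NormedAddCommGroup X] [NormedSpace ℂ X]
    {p : ℝ} (hp : 1 ≤ p) (v w : X) {t : ℝ} (ht : |t| ≤ 1) :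
    ‖(t : ℂ) • v + w‖ ^ p + ‖(-(t : ℂ)) • v + w‖ ^ p ≤ ‖v + w‖ ^ p + ‖-v + w‖ ^ p := by
  have hp0 : (0:ℝ) ≤ p := by linarith
  obtain ⟨ht1, ht2⟩ := abs_le.mp ht
  set l : ℝ := (1 + t) / 2 with hl
  have hl0 : 0 ≤ l := by simp only [hl]; linarith
  have hl1 : l ≤ 1 := by simp only [hl]; linarith
  have h1 : (t : ℂ) • v + w = (l : ℂ) • (v + w) + ((1 - l : ℝ) : ℂ) • (-v + w) := by
    have hs : ((l : ℂ)) - ((1 - l : ℝ) : ℂ) = (t : ℂ) := by push_cast [hl]; ring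
    have hs2 : ((l : ℂ)) + ((1 - l : ℝ) : ℂ) = 1 := by push_cast; ring
    rw [smul_add, smul_add, smul_neg]
    rw [show (l:ℂ) • v + (l:ℂ) • w + (-(((1-l:ℝ):ℂ) • v) + ((1-l:ℝ):ℂ) • w)
        = ((l:ℂ) - ((1-l:ℝ):ℂ)) • v + ((l:ℂ) + ((1-l:ℝ):ℂ)) • w by
      rw [sub_smul, add_smul]; abel]
    rw [hs, hs2, one_smul]
  have h2 : (-(t : ℂ)) • v + w = ((1 - l : ℝ) : ℂ) • (v + w) + (l : ℂ) • (-v + w) := by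
    have hs : (((1 - l : ℝ) : ℂ)) - (l : ℂ) = -(t : ℂ) := by push_cast [hl]; ring
    have hs2 : (((1 - l : ℝ) : ℂ)) + (l : ℂ) = 1 := by push_cast; ring
    rw [smul_add, smul_add, smul_neg]
    rw [show ((1-l:ℝ):ℂ) • v + ((1-l:ℝ):ℂ) • w + (-((l:ℂ) • v) + (l:ℂ) • w)
        = (((1-l:ℝ):ℂ) - (l:ℂ)) • v + (((1-l:ℝ):ℂ) + (l:ℂ)) • w by
      rw [sub_smul, add_smul]; abel]
    rw [hs, hs2, one_smul]
  set A := ‖v + w‖ with hA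
  set B := ‖-v + w‖ with hB
  have hAnn : 0 ≤ A := norm_nonneg _
  have hBnn : 0 ≤ B := norm_nonneg _
  have n1 : ‖(t : ℂ) • v + w‖ ≤ l * A + (1 - l) * B := by
    rw [h1]
    refine (norm_add_le _ _).trans ?_
    rw [norm_smul, norm_smul, Complex.norm_real, Complex.norm_real,
      Real.norm_eq_abs, Real.norm_eq_abs, abs_of_nonneg hl0, abs_of_nonneg (by linarith)]
  have n2 : ‖(-(t : ℂ)) • v + w‖ ≤ (1 - l) * A + l * B := by
    rw [h2]
    refine (norm_add_le _ _).trans ?_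
    rw [norm_smul, norm_smul, Complex.norm_real, Complex.norm_real,
      Real.norm_eq_abs, Real.norm_eq_abs, abs_of_nonneg hl0, abs_of_nonneg (by linarith)]
  have c1 : ‖(t : ℂ) • v + w‖ ^ p ≤ l * A ^ p + (1 - l) * B ^ p :=
    (Real.rpow_le_rpow (norm_nonneg _) n1 hp0).trans
      (rpow_convex_comb hp hl0 hl1 hAnn hBnn)
  have c2 : ‖(-(t : ℂ)) • v + w‖ ^ p ≤ (1 - l) * A ^ p + l * B ^ p := by
    refine (Real.rpow_le_rpow (norm_nonneg _) n2 hp0).trans ?_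
    have := rpow_convex_comb hp (l := 1 - l) (by linarith) (by linarith) hAnn hBnn
    simpa using this
  linarith

private lemma sum_pair {N : ℕ} (k : Fin N) (g : (Fin N → Bool) → ℝ) :
    2 * ∑ ε : Fin N → Bool, g ε =
      ∑ ε : Fin N → Bool, (g (Function.update ε k true) + g (Function.update ε k false)) := by
  classical
  have hinv : Function.Involutive (fun ε : Fin N → Bool => Function.update ε k (!ε k)) := by
    intro ε
    funext j
    by_cases h : j = k <;> simp [h, Function.update]
  have hflip : ∑ ε : Fin N → Bool, g (Function.update ε k (!ε k)) = ∑ ε : Fin N → Bool, g ε :=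
    Equiv.sum_comp hinv.toPerm g
  rw [two_mul]
  nth_rewrite 2 [← hflip]
  rw [← Finset.sum_add_distrib]
  refine Finset.sum_congr rfl fun ε _ => ?_
  by_cases h : ε k = true
  · rw [h]
    have h1 : Function.update ε k true = ε := by rw [← h]; exact Function.update_eq_self k ε
    rw [h1]
    norm_num
  · simp only [Bool.not_eq_true] at h
    rw [h]
    have h1 : Function.update ε k false = ε := by rw [← h]; exact Function.update_eq_self k ε
    rw [h1]
    simp [add_comm]

private lemma key_step {X : Type*} [NormedAddCommGroup X] [NormedSpace ℂ X]
    {p : ℝ} (hp : 1 ≤ p) {N : ℕ} (y : Fin N → X) (k : Fin N) (t : Fin N → ℝ)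
    (ht : |t k| ≤ 1) :
    ∑ ε : Fin N → Bool, ‖∑ j, ((t j : ℂ) * (if ε j then 1 else -1)) • y j‖ ^ p ≤
      ∑ ε : Fin N → Bool,
        ‖∑ j, (((Function.update t k 1) j : ℂ) * (if ε j then 1 else -1)) • y j‖ ^ p := by
  classical
  set g : (Fin N → ℝ) → (Fin N → Bool) → ℝ :=
    fun s ε => ‖∑ j, ((s j : ℂ) * (if ε j then 1 else -1)) • y j‖ ^ p with hg
  have h2 : (0:ℝ) < 2 := by norm_num
  rw [← mul_le_mul_iff_right₀ h2, sum_pair k (g t), sum_pair k (g (Function.update t k 1))]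
  refine Finset.sum_le_sum fun ε _ => ?_
  -- decompose the inner sums
  have hsplit : ∀ (s : Fin N → ℝ) (c : Bool),
      ∑ j, ((s j : ℂ) * (if (Function.update ε k c) j then 1 else -1)) • y j
        = ((s k : ℂ) * (if c then 1 else -1)) • y k
          + ∑ j ∈ Finset.univ.erase k, ((s j : ℂ) * (if ε j then 1 else -1)) • y j := by
    intro s c
    rw [← Finset.add_sum_erase _ _ (Finset.mem_univ k)]
    congr 1
    · rw [Function.update_self]
    · refine Finset.sum_congr rfl fun j hj => ?_
      rw [Function.update_of_ne (Finset.mem_erase.mp hj).1]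
  set w := ∑ j ∈ Finset.univ.erase k, ((t j : ℂ) * (if ε j then 1 else -1)) • y j with hw
  have hwsame : ∑ j ∈ Finset.univ.erase k,
      (((Function.update t k 1) j : ℂ) * (if ε j then 1 else -1)) • y j = w := by
    refine Finset.sum_congr rfl fun j hj => ?_
    rw [Function.update_of_ne (Finset.mem_erase.mp hj).1]
  have e1 : g t (Function.update ε k true) = ‖(t k : ℂ) • y k + w‖ ^ p := by
    rw [hg]; simp only []; rw [hsplit t true, ← hw]; norm_num
  have e2 : g t (Function.update ε k false) = ‖(-(t k : ℂ)) • y k + w‖ ^ p := by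
    rw [hg]; simp only []; rw [hsplit t false, ← hw]; norm_num
  have e3 : g (Function.update t k 1) (Function.update ε k true) = ‖y k + w‖ ^ p := by
    rw [hg]; simp only []; rw [hsplit _ true, hwsame, Function.update_self]; norm_num
  have e4 : g (Function.update t k 1) (Function.update ε k false) = ‖-(y k) + w‖ ^ p := by
    rw [hg]; simp only []; rw [hsplit _ false, hwsame, Function.update_self]; norm_num
  rw [e1, e2, e3, e4]
  exact step_one hp (y k) w ht

private lemma main_real {X : Type*} [NormedAddCommGroup X] [NormedSpace ℂ X]
    {p : ℝ} (hp : 1 ≤ p) {N : ℕ} (y : Fin N → X) (s : Finset (Fin N)) :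
    ∀ (t : Fin N → ℝ), (∀ j, |t j| ≤ 1) → (∀ j ∉ s, t j = 1) →
    ∑ ε : Fin N → Bool, ‖∑ j, ((t j : ℂ) * (if ε j then 1 else -1)) • y j‖ ^ p ≤
      ∑ ε : Fin N → Bool, ‖∑ j, (if ε j then (1:ℂ) else -1) • y j‖ ^ p := by
  classical
  induction s using Finset.induction_on with
  | empty =>
    intro t ht1 ht2
    have : t = fun _ => 1 := funext fun j => ht2 j (Finset.notMem_empty j)
    subst this
    simp
  | insert _ _ hk ih =>
    rename_i k s'
    intro t ht1 ht2
    refine (key_step hp y k t (ht1 k)).trans ?_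
    refine ih (Function.update t k 1) (fun j => ?_) (fun j hj => ?_)
    · by_cases h : j = k
      · subst h; rw [Function.update_self]; norm_num
      · rw [Function.update_of_ne h]; exact ht1 j
    · by_cases h : j = k
      · subst h; rw [Function.update_self]
      · rw [Function.update_of_ne h]
        exact ht2 j (fun hmem => hj (by simpa [h] using Finset.mem_insert.mp hmem |>.resolve_left h))

private lemma rpow_add_le_helper {p : ℝ} (hp : 1 ≤ p) {A B : ℝ} (hA : 0 ≤ A) (hB : 0 ≤ B) :
    (A + B) ^ p ≤ 2 ^ p * ((A ^ p + B ^ p) / 2) := by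
  have hp0 : (0:ℝ) ≤ p := by linarith
  have h1 : (A + B) ^ p = 2 ^ p * ((A + B) / 2) ^ p := by
    rw [← Real.mul_rpow (by norm_num) (by linarith)]
    congr 1
    ring
  have h2 : ((A + B) / 2) ^ p ≤ (A ^ p + B ^ p) / 2 := by
    have h := rpow_convex_comb hp (l := 1/2) (by norm_num) (by norm_num) hA hB
    rw [show (1:ℝ)/2 * A + (1 - 1/2) * B = (A + B) / 2 by ring] at h
    linarith
  have h3 : (0:ℝ) ≤ 2 ^ p := Real.rpow_nonneg (by norm_num) p
  calc (A + B) ^ p = 2 ^ p * ((A + B) / 2) ^ p := h1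
    _ ≤ 2 ^ p * ((A ^ p + B ^ p) / 2) := by
        exact mul_le_mul_of_nonneg_left h2 h3

/-- Contraction principle of Kahane (finite sign-sum form). -/
theorem kahane_contraction {X : Type*} [NormedAddCommGroup X] [NormedSpace ℂ X]
    [CompleteSpace X] (p : ℝ) (hp : 1 ≤ p) (N : ℕ) (x : Fin N → X) (a b : Fin N → ℂ)
    (hab : ∀ j, ‖a j‖ ≤ ‖b j‖) :
    ∑ ε : Fin N → Bool, ‖∑ j, (a j * (if ε j then (1 : ℂ) else -1)) • x j‖ ^ p ≤
      2 ^ p * ∑ ε : Fin N → Bool, ‖∑ j, (b j * (if ε j then (1 : ℂ) else -1)) • x j‖ ^ p := by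
  classical
  have hp0 : (0:ℝ) ≤ p := by linarith
  set c : Fin N → ℂ := fun j => if b j = 0 then 0 else a j / b j with hc_def
  have hacb : ∀ j, a j = c j * b j := by
    intro j
    simp only [hc_def]
    by_cases h : b j = 0
    · rw [if_pos h, zero_mul]
      have hthis := hab j
      rw [h, norm_zero] at hthis
      have h0 : ‖a j‖ = 0 := le_antisymm hthis (norm_nonneg _)
      simpa using h0
    · rw [if_neg h, div_mul_cancel₀ _ h]
  have hc1 : ∀ j, ‖c j‖ ≤ 1 := by
    intro j
    simp only [hc_def]
    by_cases h : b j = 0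
    · simp [h]
    · rw [if_neg h, norm_div]
      rw [div_le_one (norm_pos_iff.mpr h)]
      exact hab j
  have hre : ∀ j, |(c j).re| ≤ 1 := fun j => (Complex.abs_re_le_norm _).trans (hc1 j)
  have him : ∀ j, |(c j).im| ≤ 1 := fun j => (Complex.abs_im_le_norm _).trans (hc1 j)
  set y : Fin N → X := fun j => b j • x j with hy
  -- rewrite RHS in terms of y
  have hR : ∀ ε : Fin N → Bool,
      ∑ j, (b j * (if ε j then (1:ℂ) else -1)) • x j
        = ∑ j, (if ε j then (1:ℂ) else -1) • y j := by
    intro ε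
    refine Finset.sum_congr rfl fun j _ => ?_
    rw [hy, mul_comm, mul_smul]
  set R := ∑ ε : Fin N → Bool, ‖∑ j, (if ε j then (1:ℂ) else -1) • y j‖ ^ p with hRdef
  have hRR : ∑ ε : Fin N → Bool, ‖∑ j, (b j * (if ε j then (1:ℂ) else -1)) • x j‖ ^ p = R := by
    rw [hRdef]
    exact Finset.sum_congr rfl fun ε _ => by rw [hR ε]
  have hAle : ∑ ε : Fin N → Bool,
      ‖∑ j, (((fun j => (c j).re) j : ℂ) * (if ε j then 1 else -1)) • y j‖ ^ p ≤ R :=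
    main_real hp y Finset.univ _ hre (fun j hj => absurd (Finset.mem_univ j) hj)
  have hBle : ∑ ε : Fin N → Bool,
      ‖∑ j, (((fun j => (c j).im) j : ℂ) * (if ε j then 1 else -1)) • y j‖ ^ p ≤ R :=
    main_real hp y Finset.univ _ him (fun j hj => absurd (Finset.mem_univ j) hj)
  simp only [] at hAle hBle
  -- pointwise split
  have hsplit : ∀ ε : Fin N → Bool,
      ∑ j, (a j * (if ε j then (1:ℂ) else -1)) • x j
        = (∑ j, (((c j).re : ℂ) * (if ε j then 1 else -1)) • y j)
          + Complex.I • (∑ j, (((c j).im : ℂ) * (if ε j then 1 else -1)) • y j) := by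
    intro ε
    rw [Finset.smul_sum, ← Finset.sum_add_distrib]
    refine Finset.sum_congr rfl fun j _ => ?_
    set s : ℂ := if ε j then (1:ℂ) else -1 with hs
    rw [hy]
    simp only [smul_smul]
    rw [← add_smul]
    congr 1
    rw [hacb j]
    linear_combination (-(b j * s)) * Complex.re_add_im (c j)
  have hpt : ∀ ε : Fin N → Bool,
      ‖∑ j, (a j * (if ε j then (1:ℂ) else -1)) • x j‖ ^ p
        ≤ 2 ^ p * ((‖∑ j, (((c j).re : ℂ) * (if ε j then 1 else -1)) • y j‖ ^ p
            + ‖∑ j, (((c j).im : ℂ) * (if ε j then 1 else -1)) • y j‖ ^ p) / 2) := by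
    intro ε
    have hn : ‖∑ j, (a j * (if ε j then (1:ℂ) else -1)) • x j‖
        ≤ ‖∑ j, (((c j).re : ℂ) * (if ε j then 1 else -1)) • y j‖
          + ‖∑ j, (((c j).im : ℂ) * (if ε j then 1 else -1)) • y j‖ := by
      rw [hsplit ε]
      refine (norm_add_le _ _).trans ?_
      rw [norm_smul, Complex.norm_I, one_mul]
    refine (Real.rpow_le_rpow (norm_nonneg _) hn hp0).trans ?_
    exact rpow_add_le_helper hp (norm_nonneg _) (norm_nonneg _)
  calc ∑ ε : Fin N → Bool, ‖∑ j, (a j * (if ε j then (1:ℂ) else -1)) • x j‖ ^ p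
      ≤ ∑ ε : Fin N → Bool, 2 ^ p * ((‖∑ j, (((c j).re : ℂ) * (if ε j then 1 else -1)) • y j‖ ^ p
            + ‖∑ j, (((c j).im : ℂ) * (if ε j then 1 else -1)) • y j‖ ^ p) / 2) :=
        Finset.sum_le_sum fun ε _ => hpt ε
    _ = 2 ^ p * ((∑ ε : Fin N → Bool, ‖∑ j, (((c j).re : ℂ) * (if ε j then 1 else -1)) • y j‖ ^ p)
          + (∑ ε : Fin N → Bool, ‖∑ j, (((c j).im : ℂ) * (if ε j then 1 else -1)) • y j‖ ^ p)) / 2 := by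
        rw [← Finset.mul_sum, ← Finset.sum_div, Finset.sum_add_distrib, mul_div_assoc]
    _ ≤ 2 ^ p * (R + R) / 2 := by
        gcongr
    _ = 2 ^ p * R := by ring
    _ = 2 ^ p * ∑ ε : Fin N → Bool, ‖∑ j, (b j * (if ε j then (1:ℂ) else -1)) • x j‖ ^ p := by
        rw [hRR]
end

section
/- Difference formula for inverses (Lemma on differences, part b): For α ∈ ℕ₀ⁿ \ {0}, let 𝒵_α denote the set of all ordered decompositions 𝒲 = (ω^1,…,ω^r) of α, i.e., 1 ≤ r ≤ |α|, each ω^j is a nonzero multi-index with ω^j ≤ α, and ω^1 + ⋯ + ω^r = α; for 𝒲 ∈ 𝒵_α set ω*_j := Σ_{l = j+1}^{r} ω^l. Then there exist integers c_𝒲, indexed by 𝒲 ∈ 𝒵_α and depending only on α and 𝒲, such that for every complex Banach space X, every sequence S : ℤⁿ → L(X) of pairwise commuting bounded linear operators with each S(k) invertible with bounded inverse, and every k ∈ ℤⁿ, Δ^α(S⁻¹)(k) = Σ_{𝒲 ∈ 𝒵_α} c_𝒲 · S(k − α)⁻¹ ∘ Π_{j=1}^{r_𝒲} [ (Δ^{ω^j}S)(k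 − ω*_j) ∘ S(k − ω*_j)⁻¹ ], the product being taken in the indicated order. -/
open scoped BigOperators

universe u

/-- One-step discrete difference in direction `j`: `Δ_j M (k) = M k - M (k - e_j)`. -/
def discDiff {n : ℕ} {V : Type*} [AddCommGroup V] (j : Fin n) :
    ((Fin n → ℤ) → V) → ((Fin n → ℤ) → V) :=
  fun M k => M k - M (k - Pi.single j 1)

/-- Iterated discrete difference `Δ^γ = Δ_1^{γ_1} ∘ ⋯ ∘ Δ_n^{γ_n}` for a multi-index `γ`. -/
def discDiffMulti {n : ℕ} {V : Type*} [AddCommGroup V] (γ : Fin n → ℕ) :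
    ((Fin n → ℤ) → V) → ((Fin n → ℤ) → V) :=
  (List.finRange n).foldr (fun j F => (discDiff j)^[γ j] ∘ F) id

namespace DDAux

variable {n : ℕ}

def natCastFn (v : Fin n → ℕ) : Fin n → ℤ := fun j => (v j : ℤ)

@[simp] lemma natCastFn_zero : natCastFn (0 : Fin n → ℕ) = 0 := by
  funext j; simp [natCastFn]

@[simp] lemma natCastFn_add (v w : Fin n → ℕ) :
    natCastFn (v + w) = natCastFn v + natCastFn w := by
  funext j; simp [natCastFn]

@[simp] lemma natCastFn_single (i : Fin n) :
    natCastFn (Pi.single i 1) = Pi.single i (1 : ℤ) := by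
  funext j
  rcases eq_or_ne j i with rfl | h
  · simp [natCastFn]
  · simp [natCastFn, Pi.single_apply, h]

variable {V : Type*} [AddCommGroup V]

lemma discDiff_comm (i j : Fin n) :
    Function.Commute (discDiff (V := V) i) (discDiff j) := by
  intro M
  funext k
  simp only [discDiff]
  have h : k - Pi.single j 1 - Pi.single i 1 = k - Pi.single i 1 - Pi.single j 1 :=
    sub_right_comm _ _ _
  rw [h]
  abel

lemma foldr_congr (γ δ : Fin n → ℕ) (L : List (Fin n)) (h : ∀ j ∈ L, γ j = δ j) :
    L.foldr (fun j F => (discDiff (V := V) j)^[γ j] ∘ F) id =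
      L.foldr (fun j F => (discDiff j)^[δ j] ∘ F) id := by
  induction L with
  | nil => rfl
  | cons a L ih =>
      simp only [List.foldr_cons]
      rw [h a (by simp), ih (fun j hj => h j (by simp [hj]))]

lemma foldr_commute (γ : Fin n → ℕ) (i : Fin n) (L : List (Fin n)) (M : (Fin n → ℤ) → V) :
    L.foldr (fun j F => (discDiff j)^[γ j] ∘ F) id (discDiff i M) =
      discDiff i (L.foldr (fun j F => (discDiff j)^[γ j] ∘ F) id M) := by
  induction L with
  | nil => rfl
  | cons a L ih =>
      simp only [List.foldr_cons, Function.comp_apply, ih]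
      exact ((discDiff_comm a i).iterate_left (γ a)) _

lemma foldr_succ_at (γ δ : Fin n → ℕ) (i : Fin n) (L : List (Fin n))
    (hδi : δ i = γ i + 1) (hδ : ∀ j, j ≠ i → δ j = γ j)
    (hi : i ∈ L) (hnd : L.Nodup) (M : (Fin n → ℤ) → V) :
    L.foldr (fun j F => (discDiff j)^[δ j] ∘ F) id M =
      discDiff i (L.foldr (fun j F => (discDiff j)^[γ j] ∘ F) id M) := by
  induction L with
  | nil => simp at hi
  | cons a L ih =>
      by_cases hai : a = i
      · subst hai
        have hnotin : a ∉ L := (List.nodup_cons.1 hnd).1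
        simp only [List.foldr_cons, Function.comp_apply]
        rw [foldr_congr δ γ L (fun j hj => hδ j (fun h => hnotin (h ▸ hj)))]
        rw [hδi, Function.iterate_succ_apply']
      · have hi' : i ∈ L := by
          rcases List.mem_cons.1 hi with h | h
          · exact absurd h.symm hai
          · exact h
        simp only [List.foldr_cons, Function.comp_apply]
        rw [ih hi' (List.nodup_cons.1 hnd).2, hδ a hai]
        exact ((discDiff_comm a i).iterate_left (γ a)) _

lemma discDiffMulti_add_single (γ : Fin n → ℕ) (i : Fin n) (M : (Fin n → ℤ) → V) :
    discDiffMulti (γ + Pi.single i 1) M = discDiff i (discDiffMulti γ M) :=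
  foldr_succ_at γ (γ + Pi.single i 1) i (List.finRange n) (by simp)
    (fun j hj => by simp [Pi.single_apply, hj])
    (List.mem_finRange i) (List.nodup_finRange n) M

@[simp] lemma discDiffMulti_zero (M : (Fin n → ℤ) → V) : discDiffMulti (0 : Fin n → ℕ) M = M := by
  unfold discDiffMulti
  induction (List.finRange n) with
  | nil => rfl
  | cons a L ih => simp [ih]

lemma discDiffMulti_single (i : Fin n) (M : (Fin n → ℤ) → V) :
    discDiffMulti (Pi.single i 1) M = discDiff i M := by
  have := discDiffMulti_add_single (0 : Fin n → ℕ) i M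
  simpa using this

lemma discDiff_shift (i : Fin n) (F : (Fin n → ℤ) → V) (v k : Fin n → ℤ) :
    discDiff i (fun k' => F (k' - v)) k = discDiff i F (k - v) := by
  simp only [discDiff, sub_right_comm]


section RingLemmas

variable {n : ℕ} {A : Type*} [Ring A]

lemma discDiff_mul (i : Fin n) (F G : (Fin n → ℤ) → A) (k : Fin n → ℤ) :
    discDiff i (fun k' => F k' * G k') k =
      discDiff i F k * G k + F (k - Pi.single i 1) * discDiff i G k := by
  simp only [discDiff]
  noncomm_ring

lemma discDiff_inv (i : Fin n) (S Sinv : (Fin n → ℤ) → A)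
    (h : ∀ k, S k * Sinv k = 1 ∧ Sinv k * S k = 1) (k : Fin n → ℤ) :
    discDiff i Sinv k = -(Sinv (k - Pi.single i 1) * (discDiff i S k * Sinv k)) := by
  have h1 : Sinv (k - Pi.single i 1) * (S k * Sinv k) = Sinv (k - Pi.single i 1) := by
    rw [(h k).1, mul_one]
  have h2 : Sinv (k - Pi.single i 1) * (S (k - Pi.single i 1) * Sinv k) = Sinv k := by
    rw [← mul_assoc, (h _).2, one_mul]
  simp only [discDiff]
  rw [sub_mul, mul_sub, h1, h2, neg_sub]

/-- The product `Π_j (Δ^{ω^j} S)(k - ω*_j) * Sinv (k - ω*_j)`. -/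
def prodTerm (S Sinv : (Fin n → ℤ) → A) : List (Fin n → ℕ) → (Fin n → ℤ) → A
  | [], _ => 1
  | ω :: W, k =>
      discDiffMulti ω S (k - natCastFn W.sum) * Sinv (k - natCastFn W.sum) *
        prodTerm S Sinv W k

/-- The full term `Sinv (k - sum W) * prodTerm`. -/
def termF (S Sinv : (Fin n → ℤ) → A) (W : List (Fin n → ℕ)) (k : Fin n → ℤ) : A :=
  Sinv (k - natCastFn W.sum) * prodTerm S Sinv W k

variable (S Sinv : (Fin n → ℤ) → A)

lemma sum_set_add (W : List (Fin n → ℕ)) (j : ℕ) (hj : j < W.length) (v : Fin n → ℕ) :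
    (W.set j (W.getD j 0 + v)).sum = W.sum + v := by
  induction W generalizing j with
  | nil => simp at hj
  | cons a W ih =>
      cases j with
      | zero => simp [add_right_comm, add_comm, add_assoc, add_left_comm]
      | succ j =>
          simp only [List.set_cons_succ, List.getD_cons_succ, List.sum_cons]
          rw [ih j (by simpa using hj), add_assoc]

lemma sum_insertIdx (W : List (Fin n → ℕ)) (m : ℕ) (hm : m ≤ W.length) (v : Fin n → ℕ) :
    (W.insertIdx m v).sum = W.sum + v := by
  induction W generalizing m with
  | nil =>
      obtain rfl : m = 0 := Nat.le_zero.mp hm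
      simp
  | cons a W ih =>
      cases m with
      | zero => simp [add_comm]
      | succ m =>
          rw [List.insertIdx_succ_cons, List.sum_cons, ih m (by simpa using hm), List.sum_cons,
            add_assoc]

lemma leibniz (i : Fin n) (h : ∀ k, S k * Sinv k = 1 ∧ Sinv k * S k = 1)
    (W : List (Fin n → ℕ)) (k : Fin n → ℤ) :
    discDiff i (termF S Sinv W) k =
      (∑ j ∈ Finset.range W.length,
        termF S Sinv (W.set j (W.getD j 0 + Pi.single i 1)) k) -
      ∑ m ∈ Finset.range (W.length + 1),
        termF S Sinv (W.insertIdx m (Pi.single i 1)) k := by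
  induction W generalizing k with
  | nil =>
      have hnil : termF S Sinv ([] : List (Fin n → ℕ)) = Sinv := by
        funext k'; simp [termF, prodTerm]
      rw [hnil, discDiff_inv i S Sinv h k]
      simp [termF, prodTerm, discDiffMulti_single, mul_assoc]
  | cons ω T ih =>
      have key : termF S Sinv (ω :: T) = fun k' =>
          (fun k'' => Sinv (k'' - natCastFn ω - natCastFn T.sum) *
            discDiffMulti ω S (k'' - natCastFn T.sum)) k' * termF S Sinv T k' := by
        funext k'
        simp [termF, prodTerm, mul_assoc, sub_add_eq_sub_sub]
      rw [key, discDiff_mul i _ (termF S Sinv T) k]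
      have habs : ∀ L : List (Fin n → ℕ), L.sum = T.sum + Pi.single i 1 →
          (Sinv (k - Pi.single i 1 - natCastFn ω - natCastFn T.sum) *
            discDiffMulti ω S (k - Pi.single i 1 - natCastFn T.sum)) *
            termF S Sinv L k = termF S Sinv (ω :: L) k := by
        intro L hL
        simp only [termF, prodTerm, List.sum_cons, hL, natCastFn_add, natCastFn_single]
        simp [mul_assoc, sub_sub, add_comm, add_left_comm, add_assoc]
      have hsum2 : (Sinv (k - Pi.single i 1 - natCastFn ω - natCastFn T.sum) *
            discDiffMulti ω S (k - Pi.single i 1 - natCastFn T.sum)) *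
            discDiff i (termF S Sinv T) k =
          (∑ j ∈ Finset.range T.length,
            termF S Sinv (ω :: T.set j (T.getD j 0 + Pi.single i 1)) k) -
          ∑ m ∈ Finset.range (T.length + 1),
            termF S Sinv (ω :: T.insertIdx m (Pi.single i 1)) k := by
        rw [ih k, mul_sub, Finset.mul_sum, Finset.mul_sum]
        congr 1
        · exact Finset.sum_congr rfl fun j hj =>
            habs _ (sum_set_add T j (Finset.mem_range.1 hj) _)
        · exact Finset.sum_congr rfl fun m hm =>
            habs _ (sum_insertIdx T m (Nat.lt_succ_iff.1 (Finset.mem_range.1 hm)) _)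
      have hF1 : discDiff i (fun k'' => Sinv (k'' - natCastFn ω - natCastFn T.sum) *
            discDiffMulti ω S (k'' - natCastFn T.sum)) k =
          -(Sinv (k - natCastFn ω - natCastFn T.sum - Pi.single i 1) *
              (discDiff i S (k - natCastFn ω - natCastFn T.sum) *
                Sinv (k - natCastFn ω - natCastFn T.sum))) *
            discDiffMulti ω S (k - natCastFn T.sum) +
          Sinv (k - Pi.single i 1 - natCastFn ω - natCastFn T.sum) *
            discDiffMulti (ω + Pi.single i 1) S (k - natCastFn T.sum) := by
        rw [discDiff_mul i (fun k' => Sinv (k' - natCastFn ω - natCastFn T.sum))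
          (fun k' => discDiffMulti ω S (k' - natCastFn T.sum)) k]
        congr 1
        · congr 1
          have h1 : discDiff i (fun k' => Sinv (k' - natCastFn ω - natCastFn T.sum)) k =
              discDiff i Sinv (k - natCastFn ω - natCastFn T.sum) := by
            have := discDiff_shift i Sinv (natCastFn ω + natCastFn T.sum) k
            simp only [sub_add_eq_sub_sub] at this
            exact this
          rw [h1, discDiff_inv i S Sinv h]
        · rw [discDiff_shift i (discDiffMulti ω S) (natCastFn T.sum) k,
            ← discDiffMulti_add_single ω i S]
      have hA : -(Sinv (k - natCastFn ω - natCastFn T.sum - Pi.single i 1) *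
              (discDiff i S (k - natCastFn ω - natCastFn T.sum) *
                Sinv (k - natCastFn ω - natCastFn T.sum))) *
            discDiffMulti ω S (k - natCastFn T.sum) * termF S Sinv T k =
          -(termF S Sinv (Pi.single i 1 :: ω :: T) k) := by
        simp only [termF, prodTerm, natCastFn_add, natCastFn_single, discDiffMulti_single]
        rw [neg_mul, neg_mul]
        congr 1
        simp [mul_assoc, sub_sub, add_comm, add_left_comm, add_assoc]
      have hB : Sinv (k - Pi.single i 1 - natCastFn ω - natCastFn T.sum) *
            discDiffMulti (ω + Pi.single i 1) S (k - natCastFn T.sum) * termF S Sinv T k =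
          termF S Sinv ((ω + Pi.single i 1) :: T) k := by
        simp only [termF, prodTerm, natCastFn_add, natCastFn_single]
        simp [mul_assoc, sub_sub, add_comm, add_left_comm, add_assoc]
      rw [hF1, add_mul, hA, hB, hsum2]
      have hset : ∑ j ∈ Finset.range ((ω :: T).length),
            termF S Sinv ((ω :: T).set j ((ω :: T).getD j 0 + Pi.single i 1)) k =
          (∑ j ∈ Finset.range T.length,
            termF S Sinv (ω :: T.set j (T.getD j 0 + Pi.single i 1)) k) +
            termF S Sinv ((ω + Pi.single i 1) :: T) k := by
        rw [List.length_cons, Finset.sum_range_succ']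
        simp [List.set_cons_succ, List.getD_cons_succ, List.set_cons_zero,
          List.getD_cons_zero]
      have hins : ∑ m ∈ Finset.range ((ω :: T).length + 1),
            termF S Sinv ((ω :: T).insertIdx m (Pi.single i 1)) k =
          (∑ m ∈ Finset.range (T.length + 1),
            termF S Sinv (ω :: T.insertIdx m (Pi.single i 1)) k) +
            termF S Sinv (Pi.single i 1 :: ω :: T) k := by
        rw [List.length_cons, Finset.sum_range_succ']
        simp [List.insertIdx_succ_cons, List.insertIdx_zero]
      rw [hset, hins]
      abel

end RingLemmas

section Decomps

variable {n : ℕ}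

def listsUpTo (B : Finset (Fin n → ℕ)) : ℕ → Finset (List (Fin n → ℕ))
  | 0 => {[]}
  | r + 1 => listsUpTo B r ∪ (B ×ˢ listsUpTo B r).image fun p => p.1 :: p.2

lemma mem_listsUpTo (B : Finset (Fin n → ℕ)) (r : ℕ) (W : List (Fin n → ℕ)) :
    W ∈ listsUpTo B r ↔ W.length ≤ r ∧ ∀ x ∈ W, x ∈ B := by
  induction r generalizing W with
  | zero =>
      simp only [listsUpTo, Finset.mem_singleton]
      constructor
      · rintro rfl; simp
      · rintro ⟨h1, _⟩
        exact List.length_eq_zero_iff.1 (Nat.le_zero.1 h1)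
  | succ r ih =>
      simp only [listsUpTo, Finset.mem_union, Finset.mem_image, Finset.mem_product, ih]
      constructor
      · rintro (⟨h1, h2⟩ | ⟨⟨a, L⟩, ⟨haB, hL1, hL2⟩, rfl⟩)
        · exact ⟨h1.trans (Nat.le_succ r), h2⟩
        · refine ⟨by simpa using Nat.succ_le_succ hL1, ?_⟩
          intro x hx
          rcases List.mem_cons.1 hx with rfl | hx
          · exact haB
          · exact hL2 x hx
      · rintro ⟨h1, h2⟩
        cases W with
        | nil => exact Or.inl ⟨by simp, by simp⟩
        | cons a L =>
            right
            exact ⟨(a, L), ⟨h2 a (by simp), by simpa using Nat.succ_le_succ_iff.1 h1,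
              fun x hx => h2 x (by simp [hx])⟩, rfl⟩

open scoped Classical in
/-- The finset of ordered decompositions of `α` (with `[]` allowed iff `α = 0`). -/
noncomputable def decomps (α : Fin n → ℕ) : Finset (List (Fin n → ℕ)) :=
  (listsUpTo (Finset.Iic α) (∑ i, α i)).filter
    (fun W => W.length ≤ ∑ i, α i ∧ (∀ ω ∈ W, ω ≠ 0 ∧ ω ≤ α) ∧ W.sum = α)

lemma mem_decomps (α : Fin n → ℕ) (W : List (Fin n → ℕ)) :
    W ∈ decomps α ↔
      W.length ≤ ∑ i, α i ∧ (∀ ω ∈ W, ω ≠ 0 ∧ ω ≤ α) ∧ W.sum = α := by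
  classical
  unfold decomps
  rw [Finset.mem_filter]
  constructor
  · exact fun h => h.2
  · intro h
    refine ⟨(mem_listsUpTo _ _ _).2 ⟨h.1, fun x hx => ?_⟩, h⟩
    simpa using (h.2.1 x hx).2

lemma sum_single_one (i : Fin n) : (∑ j, Pi.single i (1 : ℕ) j) = 1 := by
  simp [Pi.single_apply]

lemma single_ne_zero' (i : Fin n) : (Pi.single i 1 : Fin n → ℕ) ≠ 0 := by
  intro h
  have := congrFun h i
  simp at this

lemma set_mem_decomps (β : Fin n → ℕ) (i : Fin n) (W : List (Fin n → ℕ))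
    (hW : W ∈ decomps β) (j : ℕ) (hj : j < W.length) :
    W.set j (W.getD j 0 + Pi.single i 1) ∈ decomps (β + Pi.single i 1) := by
  rw [mem_decomps] at hW ⊢
  obtain ⟨h1, h2, h3⟩ := hW
  have hsum : (∑ l, ((β + Pi.single i 1 : Fin n → ℕ)) l) = (∑ l, β l) + 1 := by
    simp only [Pi.add_apply, Finset.sum_add_distrib, sum_single_one]
  refine ⟨?_, ?_, ?_⟩
  · rw [List.length_set, hsum]; omega
  · intro ω hω
    rcases List.mem_or_eq_of_mem_set hω with hmem | rfl
    · exact ⟨(h2 ω hmem).1, le_add_right (h2 ω hmem).2⟩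
    · constructor
      · intro hz
        have := congrFun hz i
        simp at this
      · have : W.getD j 0 ∈ W := by
          rw [List.getD_eq_getElem _ _ hj]
          exact List.getElem_mem hj
        exact add_le_add (h2 _ this).2 le_rfl
  · rw [sum_set_add W j hj, h3]

lemma insertIdx_mem_decomps (β : Fin n → ℕ) (i : Fin n) (W : List (Fin n → ℕ))
    (hW : W ∈ decomps β) (m : ℕ) (hm : m ≤ W.length) :
    W.insertIdx m (Pi.single i 1) ∈ decomps (β + Pi.single i 1) := by
  rw [mem_decomps] at hW ⊢
  obtain ⟨h1, h2, h3⟩ := hW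
  have hsum : (∑ l, ((β + Pi.single i 1 : Fin n → ℕ)) l) = (∑ l, β l) + 1 := by
    simp only [Pi.add_apply, Finset.sum_add_distrib, sum_single_one]
  refine ⟨?_, ?_, ?_⟩
  · rw [List.length_insertIdx, if_pos hm, hsum]; omega
  · intro ω hω
    rcases (List.mem_insertIdx hm).1 hω with rfl | hmem
    · exact ⟨single_ne_zero' i, le_add_self⟩
    · exact ⟨(h2 ω hmem).1, le_add_right (h2 ω hmem).2⟩
  · rw [sum_insertIdx W m hm, h3]

end Decomps

section Main

variable {n : ℕ}

lemma discDiff_sum {A : Type*} [Ring A] (i : Fin n) (Z : Finset (List (Fin n → ℕ)))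
    (f : List (Fin n → ℕ) → (Fin n → ℤ) → A) (k : Fin n → ℤ) :
    discDiff i (fun k' => ∑ W ∈ Z, f W k') k = ∑ W ∈ Z, discDiff i (f W) k := by
  simp [discDiff, Finset.sum_sub_distrib]

lemma discDiff_zsmul {A : Type*} [Ring A] (i : Fin n) (c : ℤ)
    (f : (Fin n → ℤ) → A) (k : Fin n → ℤ) :
    discDiff i (fun k' => c • f k') k = c • discDiff i f k := by
  simp [discDiff, smul_sub]

lemma main_repr : ∀ (N : ℕ) (α : Fin n → ℕ), (∑ i, α i) = N →
    ∃ c : List (Fin n → ℕ) → ℤ,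
      ∀ (A : Type u) [Ring A] (S Sinv : (Fin n → ℤ) → A),
        (∀ k, S k * Sinv k = 1 ∧ Sinv k * S k = 1) →
        ∀ k : Fin n → ℤ,
          discDiffMulti α Sinv k = ∑ W ∈ decomps α, c W • termF S Sinv W k := by
  intro N
  induction N with
  | zero =>
      intro α hα
      have hα0 : α = 0 := by
        funext j
        exact (Finset.sum_eq_zero_iff.1 hα) j (Finset.mem_univ j)
      subst hα0
      refine ⟨fun W => if W = [] then 1 else 0, ?_⟩
      intro A _ S Sinv h k
      have hmem : ([] : List (Fin n → ℕ)) ∈ decomps (0 : Fin n → ℕ) := by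
        rw [mem_decomps]; simp
      have : ∑ W ∈ decomps (0 : Fin n → ℕ),
          (if W = [] then (1:ℤ) else 0) • termF S Sinv W k =
          ∑ W ∈ decomps (0 : Fin n → ℕ),
          (if W = [] then termF S Sinv W k else 0) := by
        refine Finset.sum_congr rfl fun W _ => ?_
        split <;> simp
      rw [this, Finset.sum_ite_eq' _ [] (fun W => termF S Sinv W k), if_pos hmem]
      simp [termF, prodTerm]
  | succ N ihN =>
      intro α hα
      have hex : ∃ i, α i ≠ 0 := by
        by_contra hc
        push_neg at hc
        have : α = 0 := funext fun j => hc j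
        rw [this] at hα
        simp at hα
      obtain ⟨i, hi⟩ := hex
      set β : Fin n → ℕ := Function.update α i (α i - 1) with hβ
      have hαβ : α = β + Pi.single i 1 := by
        funext j
        rcases eq_or_ne j i with rfl | hne
        · simp [hβ, Function.update_self]
          omega
        · simp [hβ, Function.update_of_ne hne, Pi.single_apply, hne]
      have hβN : (∑ j, β j) = N := by
        have h1 : (∑ j, α j) = (∑ j, β j) + 1 := by
          rw [hαβ]
          simp only [Pi.add_apply, Finset.sum_add_distrib, sum_single_one]
        omega
      obtain ⟨c, hc⟩ := ihN β hβN
      refine ⟨fun W' => ∑ W ∈ decomps β, c W *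
        ((∑ j ∈ Finset.range W.length,
            if W' = W.set j (W.getD j 0 + Pi.single i 1) then (1:ℤ) else 0) -
          ∑ m ∈ Finset.range (W.length + 1),
            if W' = W.insertIdx m (Pi.single i 1) then (1:ℤ) else 0), ?_⟩
      intro A _ S Sinv h k
      classical
      have hIH : discDiffMulti β Sinv = fun k' => ∑ W ∈ decomps β, c W • termF S Sinv W k' :=
        funext (hc A S Sinv h)
      have hL : discDiffMulti α Sinv k =
          ∑ W ∈ decomps β, c W •
            ((∑ j ∈ Finset.range W.length,
              termF S Sinv (W.set j (W.getD j 0 + Pi.single i 1)) k) -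
             ∑ m ∈ Finset.range (W.length + 1),
              termF S Sinv (W.insertIdx m (Pi.single i 1)) k) := by
        rw [hαβ, discDiffMulti_add_single β i Sinv, hIH, discDiff_sum]
        refine Finset.sum_congr rfl fun W _ => ?_
        rw [discDiff_zsmul, leibniz S Sinv i h W k]
      rw [hL]
      symm
      simp only [Finset.sum_smul]
      rw [Finset.sum_comm]
      refine Finset.sum_congr rfl fun W hW => ?_
      simp only [mul_smul]
      rw [← Finset.smul_sum]
      congr 1
      simp only [sub_smul, Finset.sum_smul, ite_smul, one_smul, zero_smul,
        Finset.sum_sub_distrib]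
      congr 1
      · rw [Finset.sum_comm]
        refine Finset.sum_congr rfl fun j hj => ?_
        rw [Finset.sum_ite_eq' (decomps α) _ (fun W' => termF S Sinv W' k), if_pos]
        rw [hαβ]
        exact set_mem_decomps β i W hW j (Finset.mem_range.1 hj)
      · rw [Finset.sum_comm]
        refine Finset.sum_congr rfl fun m hm => ?_
        rw [Finset.sum_ite_eq' (decomps α) _ (fun W' => termF S Sinv W' k), if_pos]
        rw [hαβ]
        exact insertIdx_mem_decomps β i W hW m (Nat.lt_succ_iff.1 (Finset.mem_range.1 hm))

end Main

lemma prodTerm_eq_prod {n : ℕ} {A : Type*} [Ring A] (S Sinv : (Fin n → ℤ) → A) :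
    ∀ (W : List (Fin n → ℕ)) (k : Fin n → ℤ),
      prodTerm S Sinv W k =
        ((List.range W.length).map (fun j =>
          discDiffMulti (W.getD j 0) S (k - fun i => (((W.drop (j + 1)).sum) i : ℤ)) *
            Sinv (k - fun i => (((W.drop (j + 1)).sum) i : ℤ)))).prod := by
  intro W
  induction W with
  | nil => intro k; simp [prodTerm]
  | cons ω T ih =>
      intro k
      rw [List.length_cons, List.range_succ_eq_map, List.map_cons, List.map_map,
        List.prod_cons]
      have htail : ((fun j =>
          discDiffMulti ((ω :: T).getD j 0) S
              (k - fun i => ((((ω :: T).drop (j + 1)).sum) i : ℤ)) *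
            Sinv (k - fun i => ((((ω :: T).drop (j + 1)).sum) i : ℤ))) ∘ Nat.succ) =
          (fun j =>
          discDiffMulti (T.getD j 0) S (k - fun i => (((T.drop (j + 1)).sum) i : ℤ)) *
            Sinv (k - fun i => (((T.drop (j + 1)).sum) i : ℤ))) := by
        funext j
        simp [Function.comp, List.getD_cons_succ, List.drop_succ_cons]
      rw [htail, ← ih k]
      rfl

end DDAux

/-- Difference formula for inverses: there is a finite set `Z` consisting exactly of the
ordered decompositions `𝒲 = (ω^1, …, ω^r)` of `α` (with `1 ≤ r ≤ |α|`, each `ω^j ≠ 0`,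
`ω^j ≤ α`, and `ω^1 + ⋯ + ω^r = α`, encoded as lists) and integer constants `c_𝒲` such
that for every commuting sequence `S` of invertible operators,
`Δ^α(S⁻¹)(k) = Σ_𝒲 c_𝒲 S(k−α)⁻¹ ∘ Π_j [(Δ^{ω^j}S)(k−ω*_j) ∘ S(k−ω*_j)⁻¹]`,
where `ω*_j = Σ_{l > j} ω^l`. -/
theorem discDiffMulti_inv (n : ℕ) (α : Fin n → ℕ) (hα : α ≠ 0) :
    ∃ (Z : Finset (List (Fin n → ℕ))) (c : List (Fin n → ℕ) → ℤ),
      (∀ W : List (Fin n → ℕ), W ∈ Z ↔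
        (1 ≤ W.length ∧ W.length ≤ ∑ i, α i ∧
          (∀ ω ∈ W, ω ≠ 0 ∧ ω ≤ α) ∧ W.sum = α)) ∧
      ∀ (X : Type u) [NormedAddCommGroup X] [NormedSpace ℂ X]
        (S Sinv : (Fin n → ℤ) → (X →L[ℂ] X)),
        (∀ k l, Commute (S k) (S l)) →
        (∀ k l, Commute (S k) (Sinv l)) →
        (∀ k, S k * Sinv k = 1 ∧ Sinv k * S k = 1) →
        ∀ k : Fin n → ℤ,
          discDiffMulti α Sinv k =
            ∑ W ∈ Z, c W •
              (Sinv (k - fun i => (α i : ℤ)) *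
                ((List.range W.length).map (fun j =>
                  discDiffMulti (W.getD j 0) S
                      (k - fun i => (((W.drop (j + 1)).sum) i : ℤ)) *
                    Sinv (k - fun i => (((W.drop (j + 1)).sum) i : ℤ)))).prod) := by
  classical
  obtain ⟨c, hc⟩ := DDAux.main_repr (n := n) (∑ i, α i) α rfl
  refine ⟨DDAux.decomps α, c, ?_, ?_⟩
  · intro W
    rw [DDAux.mem_decomps]
    constructor
    · rintro ⟨h1, h2, h3⟩
      refine ⟨?_, h1, h2, h3⟩
      rcases W with _ | ⟨a, W⟩
      · exfalso; exact hα (by simpa using h3.symm)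
      · simp
    · rintro ⟨_, h1, h2, h3⟩
      exact ⟨h1, h2, h3⟩
  · intro X _ _ S Sinv _ _ hinv k
    rw [hc (X →L[ℂ] X) S Sinv hinv k]
    refine Finset.sum_congr rfl fun W hW => ?_
    congr 1
    have hWsum : W.sum = α := ((DDAux.mem_decomps α W).1 hW).2.2
    rw [DDAux.termF, DDAux.prodTerm_eq_prod, hWsum]
    rfl
end

section
/- Characterization of ellipticity: Let P be a polynomial in n variables with complex coefficients. Then P is elliptic if and only if for every polynomial N in n variables with complex coefficients satisfying deg N ≤ deg P there exist a constant C > 0 and a bounded subset G ⊂ ℝⁿ such that the estimate |ξ|^m · |N(ξ)| ≤ C · |P(ξ)| holds for all integers m with 0 ≤ m ≤ deg P − deg N and all ξ ∈ ℝⁿ \ G. -/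
open scoped BigOperators
open MvPolynomial Finset Metric

section Aux

variable {n : ℕ}

private lemma eval_homog_mul {σ : Type*} {k : ℕ} {p : MvPolynomial σ ℂ}
    (hp : p.IsHomogeneous k) (c : ℂ) (x : σ → ℂ) :
    MvPolynomial.eval (fun i => c * x i) p = c ^ k * MvPolynomial.eval x p := by
  rw [MvPolynomial.eval_eq, MvPolynomial.eval_eq, Finset.mul_sum]
  refine Finset.sum_congr rfl fun d hd => ?_
  have hdk : ∑ i ∈ d.support, d i = k := by
    have h := hp (MvPolynomial.mem_support_iff.mp hd)
    simpa [Finsupp.weight_apply, Finsupp.sum] using h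
  simp_rw [mul_pow]
  rw [Finset.prod_mul_distrib, Finset.prod_pow_eq_pow_sum, hdk]
  ring

private lemma contEval (p : MvPolynomial (Fin n) ℂ) :
    Continuous fun ξ : EuclideanSpace ℝ (Fin n) =>
      MvPolynomial.eval (fun i => (ξ i : ℂ)) p := by
  have h1 : Continuous fun ξ : EuclideanSpace ℝ (Fin n) => (fun i => (ξ i : ℂ)) :=
    continuous_pi fun i =>
      Complex.continuous_ofReal.comp ((EuclideanSpace.proj i).continuous)
  exact p.continuous_eval.comp h1

private lemma coe_smul_apply (t : ℝ) (ξ : EuclideanSpace ℝ (Fin n)) (i : Fin n) :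
    ((t • ξ) i : ℂ) = (t : ℂ) * (ξ i : ℂ) := by
  have : (t • ξ) i = t * ξ i := rfl
  rw [this]; push_cast; ring

private lemma homog_bound {k : ℕ} {p : MvPolynomial (Fin n) ℂ} (hp : p.IsHomogeneous k) :
    ∃ M : ℝ, 0 ≤ M ∧ ∀ ξ : EuclideanSpace ℝ (Fin n), ξ ≠ 0 →
      ‖MvPolynomial.eval (fun i => (ξ i : ℂ)) p‖ ≤ M * ‖ξ‖ ^ k := by
  obtain ⟨M, hM⟩ := (isCompact_sphere (0 : EuclideanSpace ℝ (Fin n)) 1)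
    |>.exists_bound_of_continuousOn (contEval p).continuousOn
  refine ⟨max M 0, le_max_right _ _, fun ξ hξ => ?_⟩
  have hξn : (0 : ℝ) < ‖ξ‖ := norm_pos_iff.mpr hξ
  set u : EuclideanSpace ℝ (Fin n) := ‖ξ‖⁻¹ • ξ with hu
  have hus : u ∈ sphere (0 : EuclideanSpace ℝ (Fin n)) 1 := by
    simp [hu, norm_smul, abs_of_pos (inv_pos.mpr hξn), inv_mul_cancel₀ hξn.ne']
  have hxu : ξ = ‖ξ‖ • u := by
    rw [hu, smul_smul, mul_inv_cancel₀ hξn.ne', one_smul]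
  have hcoe : (fun i => (ξ i : ℂ)) = fun i => ((‖ξ‖ : ℝ) : ℂ) * (u i : ℂ) := by
    funext i
    conv_lhs => rw [hxu]
    exact coe_smul_apply _ _ _
  rw [hcoe, eval_homog_mul hp]
  rw [norm_mul, norm_pow, Complex.norm_real, Real.norm_of_nonneg hξn.le, mul_comm]
  gcongr
  exact le_max_of_le_left (hM u hus)

private lemma poly_bound (q : MvPolynomial (Fin n) ℂ) (e : ℕ) (he : q.totalDegree ≤ e) :
    ∃ M : ℝ, 0 ≤ M ∧ ∀ ξ : EuclideanSpace ℝ (Fin n), 1 ≤ ‖ξ‖ →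
      ‖MvPolynomial.eval (fun i => (ξ i : ℂ)) q‖ ≤ M * ‖ξ‖ ^ e := by
  have key : ∀ k : ℕ, ∃ M : ℝ, 0 ≤ M ∧ ∀ ξ : EuclideanSpace ℝ (Fin n), ξ ≠ 0 →
      ‖MvPolynomial.eval (fun i => (ξ i : ℂ)) (homogeneousComponent k q)‖ ≤ M * ‖ξ‖ ^ k :=
    fun k => homog_bound (homogeneousComponent_isHomogeneous k q)
  choose M hM0 hM using key
  refine ⟨∑ k ∈ range (q.totalDegree + 1), M k,
    Finset.sum_nonneg fun k _ => hM0 k, fun ξ hξ => ?_⟩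
  have hξ0 : ξ ≠ 0 := by
    intro h; rw [h, norm_zero] at hξ; linarith
  have h1 : 0 < ‖ξ‖ := by linarith
  calc ‖MvPolynomial.eval (fun i => (ξ i : ℂ)) q‖
      = ‖MvPolynomial.eval (fun i => (ξ i : ℂ))
          (∑ k ∈ range (q.totalDegree + 1), homogeneousComponent k q)‖ := by
        rw [q.sum_homogeneousComponent]
    _ = ‖∑ k ∈ range (q.totalDegree + 1),
          MvPolynomial.eval (fun i => (ξ i : ℂ)) (homogeneousComponent k q)‖ := by
        rw [map_sum]
    _ ≤ ∑ k ∈ range (q.totalDegree + 1),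
          ‖MvPolynomial.eval (fun i => (ξ i : ℂ)) (homogeneousComponent k q)‖ :=
        norm_sum_le _ _
    _ ≤ ∑ k ∈ range (q.totalDegree + 1), M k * ‖ξ‖ ^ e := by
        refine Finset.sum_le_sum fun k hk => ?_
        refine (hM k ξ hξ0).trans ?_
        have hke : k ≤ e := le_trans (Nat.lt_succ_iff.mp (Finset.mem_range.mp hk)) he
        exact mul_le_mul_of_nonneg_left (pow_le_pow_right₀ hξ hke) (hM0 k)
    _ = (∑ k ∈ range (q.totalDegree + 1), M k) * ‖ξ‖ ^ e := by rw [Finset.sum_mul]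

end Aux

/-- `P` is elliptic: its principal part `P^#` (the homogeneous component of degree
`deg P`) does not vanish on `ℝⁿ \ {0}`. -/
def IsElliptic {n : ℕ} (P : MvPolynomial (Fin n) ℂ) : Prop :=
  ∀ ξ : EuclideanSpace ℝ (Fin n), ξ ≠ 0 →
    MvPolynomial.eval (fun i => (ξ i : ℂ))
      (MvPolynomial.homogeneousComponent P.totalDegree P) ≠ 0

/-- Characterization of ellipticity. -/
theorem isElliptic_iff {n : ℕ} (P : MvPolynomial (Fin n) ℂ) :
    IsElliptic P ↔
      ∀ N : MvPolynomial (Fin n) ℂ, N.totalDegree ≤ P.totalDegree →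
        ∃ C : ℝ, 0 < C ∧ ∃ G : Set (EuclideanSpace ℝ (Fin n)), Bornology.IsBounded G ∧
          ∀ m : ℕ, m ≤ P.totalDegree - N.totalDegree →
            ∀ ξ : EuclideanSpace ℝ (Fin n), ξ ∉ G →
              ‖ξ‖ ^ m * ‖MvPolynomial.eval (fun i => (ξ i : ℂ)) N‖ ≤
                C * ‖MvPolynomial.eval (fun i => (ξ i : ℂ)) P‖ := by
  constructor
  · -- forward
    intro hell N hN
    rcases Nat.eq_zero_or_pos n with hn | hn
    · subst hn
      refine ⟨1, one_pos, Set.univ, ?_, fun m _ ξ hξ => absurd (Set.mem_univ ξ) hξ⟩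
      refine (isBounded_closedBall (x := (0 : EuclideanSpace ℝ (Fin 0))) (r := 1)).subset ?_
      intro ξ _
      have : ξ = 0 := Subsingleton.elim ξ 0
      simp [this]
    set d := P.totalDegree with hd
    set H := homogeneousComponent d P with hH
    -- min of ‖H‖ on the sphere
    have hsne : (sphere (0 : EuclideanSpace ℝ (Fin n)) 1).Nonempty := by
      refine ⟨EuclideanSpace.single ⟨0, hn⟩ (1 : ℝ), ?_⟩
      simp [EuclideanSpace.norm_single]
    obtain ⟨u, hu, hmin⟩ := (isCompact_sphere (0 : EuclideanSpace ℝ (Fin n)) 1)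
      |>.exists_isMinOn hsne (contEval H).norm.continuousOn
    have hu0 : u ≠ 0 := by
      intro h
      rw [mem_sphere_zero_iff_norm, h, norm_zero] at hu
      norm_num at hu
    set c : ℝ := ‖MvPolynomial.eval (fun i => (u i : ℂ)) H‖ with hc
    have hcpos : 0 < c := norm_pos_iff.mpr (hell u hu0)
    -- lower bound by homogeneity
    have hlow : ∀ ξ : EuclideanSpace ℝ (Fin n), ξ ≠ 0 →
        c * ‖ξ‖ ^ d ≤ ‖MvPolynomial.eval (fun i => (ξ i : ℂ)) H‖ := by
      intro ξ hξ
      have hξn : (0 : ℝ) < ‖ξ‖ := norm_pos_iff.mpr hξ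
      set v : EuclideanSpace ℝ (Fin n) := ‖ξ‖⁻¹ • ξ with hv
      have hvs : v ∈ sphere (0 : EuclideanSpace ℝ (Fin n)) 1 := by
        simp [hv, norm_smul, abs_of_pos (inv_pos.mpr hξn), inv_mul_cancel₀ hξn.ne']
      have hxv : ξ = ‖ξ‖ • v := by
        rw [hv, smul_smul, mul_inv_cancel₀ hξn.ne', one_smul]
      have hcoe : (fun i => (ξ i : ℂ)) = fun i => ((‖ξ‖ : ℝ) : ℂ) * (v i : ℂ) := by
        funext i
        conv_lhs => rw [hxv]
        exact coe_smul_apply _ _ _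
      rw [hcoe, eval_homog_mul (homogeneousComponent_isHomogeneous d P) ]
      rw [norm_mul, norm_pow, Complex.norm_real, Real.norm_of_nonneg hξn.le, mul_comm]
      gcongr
      exact hmin hvs
    -- upper bound on the lower-order part
    have key : ∀ k : ℕ, ∃ M : ℝ, 0 ≤ M ∧ ∀ ξ : EuclideanSpace ℝ (Fin n), ξ ≠ 0 →
        ‖MvPolynomial.eval (fun i => (ξ i : ℂ)) (homogeneousComponent k P)‖ ≤ M * ‖ξ‖ ^ k :=
      fun k => homog_bound (homogeneousComponent_isHomogeneous k P)
    choose Mk hMk0 hMk using key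
    set B : ℝ := ∑ k ∈ range d, Mk k with hB
    have hB0 : 0 ≤ B := Finset.sum_nonneg fun k _ => hMk0 k
    -- bound on N
    obtain ⟨M, hM0, hMN⟩ := poly_bound N N.totalDegree le_rfl
    -- the bounded exceptional set
    set R : ℝ := max 1 (2 * B / c) with hR
    refine ⟨2 * M / c + 1, by positivity, closedBall 0 R, isBounded_closedBall, ?_⟩
    intro m hm ξ hξG
    have hξR : R < ‖ξ‖ := by
      by_contra hcon
      exact hξG (mem_closedBall_zero_iff.mpr (not_lt.mp hcon))
    have hξ1 : 1 ≤ ‖ξ‖ := le_trans (le_max_left _ _) hξR.le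
    have hξ0 : ξ ≠ 0 := by intro h; rw [h, norm_zero] at hξ1; linarith
    have hξpos : (0 : ℝ) < ‖ξ‖ := by linarith
    -- eval P = eval H + eval (lower part)
    have hsplit : MvPolynomial.eval (fun i => (ξ i : ℂ)) P
        = MvPolynomial.eval (fun i => (ξ i : ℂ)) H
          + ∑ k ∈ range d, MvPolynomial.eval (fun i => (ξ i : ℂ)) (homogeneousComponent k P) := by
      conv_lhs => rw [← P.sum_homogeneousComponent]
      rw [map_sum, ← hd, Finset.sum_range_succ, ← hH, add_comm]
    have hQle : ‖∑ k ∈ range d, MvPolynomial.eval (fun i => (ξ i : ℂ))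
        (homogeneousComponent k P)‖ ≤ B * ‖ξ‖ ^ (d - 1) := by
      calc ‖∑ k ∈ range d, MvPolynomial.eval (fun i => (ξ i : ℂ)) (homogeneousComponent k P)‖
          ≤ ∑ k ∈ range d, ‖MvPolynomial.eval (fun i => (ξ i : ℂ)) (homogeneousComponent k P)‖ :=
            norm_sum_le _ _
        _ ≤ ∑ k ∈ range d, Mk k * ‖ξ‖ ^ (d - 1) := by
            refine Finset.sum_le_sum fun k hk => ?_
            refine (hMk k ξ hξ0).trans ?_
            have : k ≤ d - 1 := Nat.le_sub_one_of_lt (Finset.mem_range.mp hk)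
            exact mul_le_mul_of_nonneg_left (pow_le_pow_right₀ hξ1 this) (hMk0 k)
        _ = B * ‖ξ‖ ^ (d - 1) := by rw [Finset.sum_mul]
    -- lower bound on ‖P(ξ)‖
    have hPlow : c / 2 * ‖ξ‖ ^ d ≤ ‖MvPolynomial.eval (fun i => (ξ i : ℂ)) P‖ := by
      have h1 : ‖MvPolynomial.eval (fun i => (ξ i : ℂ)) H‖
          - ‖∑ k ∈ range d, MvPolynomial.eval (fun i => (ξ i : ℂ)) (homogeneousComponent k P)‖
          ≤ ‖MvPolynomial.eval (fun i => (ξ i : ℂ)) P‖ := by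
        rw [hsplit]
        have h2 := norm_le_add_norm_add (MvPolynomial.eval (fun i => (ξ i : ℂ)) H)
          (∑ k ∈ range d, MvPolynomial.eval (fun i => (ξ i : ℂ)) (homogeneousComponent k P))
        linarith
      have hBround : B * ‖ξ‖ ^ (d - 1) ≤ c / 2 * ‖ξ‖ ^ d := by
        rcases Nat.eq_zero_or_pos d with h0 | hdpos
        · have : B = 0 := by rw [hB, h0]; simp
          rw [this, h0]
          simp
          positivity
        · have hpow : ‖ξ‖ ^ d = ‖ξ‖ ^ (d - 1) * ‖ξ‖ := by
            rw [← pow_succ, Nat.sub_add_cancel hdpos]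
          rw [hpow]
          have hBc : B ≤ c / 2 * ‖ξ‖ := by
            have h2B : 2 * B / c ≤ ‖ξ‖ := le_trans (le_max_right _ _) hξR.le
            rw [div_le_iff₀ hcpos] at h2B
            nlinarith
          have hx : (0:ℝ) ≤ ‖ξ‖ ^ (d - 1) := by positivity
          nlinarith [mul_le_mul_of_nonneg_right hBc hx]
      have := hlow ξ hξ0
      linarith [hQle]
    -- conclude
    have hmd : m + N.totalDegree ≤ d := Nat.add_le_of_le_sub hN hm
    calc ‖ξ‖ ^ m * ‖MvPolynomial.eval (fun i => (ξ i : ℂ)) N‖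
        ≤ ‖ξ‖ ^ m * (M * ‖ξ‖ ^ N.totalDegree) :=
          mul_le_mul_of_nonneg_left (hMN ξ hξ1) (by positivity)
      _ = M * ‖ξ‖ ^ (m + N.totalDegree) := by rw [pow_add]; ring
      _ ≤ M * ‖ξ‖ ^ d := mul_le_mul_of_nonneg_left (pow_le_pow_right₀ hξ1 hmd) hM0
      _ = (2 * M / c) * (c / 2 * ‖ξ‖ ^ d) := by
          field_simp
      _ ≤ (2 * M / c) * ‖MvPolynomial.eval (fun i => (ξ i : ℂ)) P‖ :=
          mul_le_mul_of_nonneg_left hPlow (by positivity)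
      _ ≤ (2 * M / c + 1) * ‖MvPolynomial.eval (fun i => (ξ i : ℂ)) P‖ := by
          have : (0:ℝ) ≤ ‖MvPolynomial.eval (fun i => (ξ i : ℂ)) P‖ := norm_nonneg _
          nlinarith
  · -- reverse
    intro h ξ₀ hξ₀
    intro hzero
    obtain ⟨C, hC, G, hG, hest⟩ := h 1 (by simp [MvPolynomial.totalDegree_one])
    obtain ⟨R, hR⟩ := (isBounded_iff_subset_closedBall 0).mp hG
    set d := P.totalDegree with hd
    set B : ℝ := ∑ k ∈ range d,
      ‖MvPolynomial.eval (fun i => (ξ₀ i : ℂ)) (homogeneousComponent k P)‖ with hB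
    have hB0 : 0 ≤ B := Finset.sum_nonneg fun k _ => norm_nonneg _
    have hξn : (0 : ℝ) < ‖ξ₀‖ := norm_pos_iff.mpr hξ₀
    set t : ℝ := max (max 1 ((R + 1) / ‖ξ₀‖)) ((C * B + 1) / ‖ξ₀‖ ^ d) with ht
    have ht1 : 1 ≤ t := le_trans (le_max_left _ _) (le_max_left _ _)
    have ht0 : 0 < t := by linarith
    have htR : R < t * ‖ξ₀‖ := by
      have : (R + 1) / ‖ξ₀‖ ≤ t := le_trans (le_max_right _ _) (le_max_left _ _)
      rw [div_le_iff₀ hξn] at this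
      linarith
    have htB : C * B < t * ‖ξ₀‖ ^ d := by
      have h1 : (C * B + 1) / ‖ξ₀‖ ^ d ≤ t := le_max_right _ _
      rw [div_le_iff₀ (by positivity)] at h1
      linarith
    have hnG : t • ξ₀ ∉ G := by
      intro hmem
      have := hR hmem
      rw [mem_closedBall_zero_iff, norm_smul, Real.norm_of_nonneg ht0.le] at this
      linarith
    -- expansion of P at t • ξ₀
    have hval : MvPolynomial.eval (fun i => ((t • ξ₀) i : ℂ)) P
        = ∑ k ∈ range d, (t : ℂ) ^ k
            * MvPolynomial.eval (fun i => (ξ₀ i : ℂ)) (homogeneousComponent k P) := by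
      have hcoe : (fun i => ((t • ξ₀) i : ℂ)) = fun i => (t : ℂ) * (ξ₀ i : ℂ) :=
        funext fun i => coe_smul_apply _ _ _
      conv_lhs => rw [hcoe, ← P.sum_homogeneousComponent]
      rw [map_sum, Finset.sum_range_succ]
      have hlast : MvPolynomial.eval (fun i => (t : ℂ) * (ξ₀ i : ℂ))
          (homogeneousComponent P.totalDegree P) = 0 := by
        rw [eval_homog_mul (homogeneousComponent_isHomogeneous _ P), hzero, mul_zero]
      rw [hlast, add_zero]
      exact Finset.sum_congr rfl fun k _ =>
        eval_homog_mul (homogeneousComponent_isHomogeneous k P) _ _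
    have hup : ‖MvPolynomial.eval (fun i => ((t • ξ₀) i : ℂ)) P‖ ≤ B * t ^ (d - 1) := by
      rw [hval]
      calc ‖∑ k ∈ range d, (t : ℂ) ^ k
            * MvPolynomial.eval (fun i => (ξ₀ i : ℂ)) (homogeneousComponent k P)‖
          ≤ ∑ k ∈ range d, ‖(t : ℂ) ^ k
            * MvPolynomial.eval (fun i => (ξ₀ i : ℂ)) (homogeneousComponent k P)‖ :=
            norm_sum_le _ _
        _ ≤ ∑ k ∈ range d, t ^ (d - 1)
            * ‖MvPolynomial.eval (fun i => (ξ₀ i : ℂ)) (homogeneousComponent k P)‖ := by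
            refine Finset.sum_le_sum fun k hk => ?_
            rw [norm_mul, norm_pow, Complex.norm_real, Real.norm_of_nonneg ht0.le]
            refine mul_le_mul_of_nonneg_right ?_ (norm_nonneg _)
            exact pow_le_pow_right₀ ht1 (Nat.le_sub_one_of_lt (Finset.mem_range.mp hk))
        _ = B * t ^ (d - 1) := by rw [← Finset.mul_sum, ← hB, mul_comm]
    -- the estimate with N = 1, m = d
    have hest' := hest d (by simp [MvPolynomial.totalDegree_one]) (t • ξ₀) hnG
    rw [map_one, norm_one, mul_one, norm_smul, Real.norm_of_nonneg ht0.le] at hest'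
    have hfin : (t * ‖ξ₀‖) ^ d ≤ C * (B * t ^ (d - 1)) :=
      le_trans hest' (mul_le_mul_of_nonneg_left hup hC.le)
    rcases Nat.eq_zero_or_pos d with h0 | hdpos
    · have hBz : B = 0 := by rw [hB, h0]; simp
      rw [h0, hBz] at hfin
      simp at hfin
      linarith
    · have hpow : (t * ‖ξ₀‖) ^ d = t ^ (d - 1) * (t * ‖ξ₀‖ ^ d) := by
        have htd : t ^ d = t ^ (d - 1) * t := by
          rw [← pow_succ, Nat.sub_add_cancel hdpos]
        rw [mul_pow, htd]; ring
      rw [hpow] at hfin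
      have htd : 0 < t ^ (d - 1) := by positivity
      have : t * ‖ξ₀‖ ^ d ≤ C * B := by
        have := hfin
        rw [mul_comm C (B * t ^ (d-1))] at this
        nlinarith
      linarith
end

section
/- Discrete estimate for elliptic polynomials: Let P be an elliptic polynomial in n variables with complex coefficients and let α ∈ ℕ₀ⁿ with |α| ≤ deg P. Then there exist a constant C > 0 and a finite set G ⊂ ℤⁿ such that |k|^{|α|} · |Δ^α(P|_{ℤⁿ})(k)| ≤ C · |P(k)| for all k ∈ ℤⁿ \ G. -/
open scoped BigOperators

open MvPolynomial

noncomputable section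

variable {n : ℕ}

/-- The shift substitution `X_i ↦ X_i - δ_{ij}` as an algebra hom. -/
def shiftOp (j : Fin n) : MvPolynomial (Fin n) ℂ →ₐ[ℂ] MvPolynomial (Fin n) ℂ :=
  aeval (fun i => X i - if i = j then 1 else 0)

def polyDiff (j : Fin n) (Q : MvPolynomial (Fin n) ℂ) : MvPolynomial (Fin n) ℂ :=
  Q - shiftOp j Q

def polyDiffMulti (γ : Fin n → ℕ) (Q : MvPolynomial (Fin n) ℂ) : MvPolynomial (Fin n) ℂ :=
  (List.finRange n).foldr (fun j R => (polyDiff j)^[γ j] R) Q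

/-- evaluation of the shifted polynomial. -/
lemma eval_shiftOp (j : Fin n) (Q : MvPolynomial (Fin n) ℂ) (x : Fin n → ℂ) :
    eval x (shiftOp j Q) = eval (fun i => x i - if i = j then 1 else 0) Q := by
  have h := comp_aeval_apply (fun i : Fin n => X i - if i = j then 1 else 0)
      (aeval x : MvPolynomial (Fin n) ℂ →ₐ[ℂ] ℂ) Q
  have e1 : ∀ (g : Fin n → ℂ) (p : MvPolynomial (Fin n) ℂ), aeval g p = eval g p :=
    fun g p => DFunLike.congr_fun (coe_aeval_eq_eval (f := g)) p
  rw [shiftOp, ← e1 x, h]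
  have e2 : (fun i => (aeval x : MvPolynomial (Fin n) ℂ →ₐ[ℂ] ℂ)
      ((X i : MvPolynomial (Fin n) ℂ) - if i = j then 1 else 0)) =
      fun i => x i - if i = j then 1 else 0 := by
    funext i; by_cases hij : i = j <;> simp [hij]
  rw [e2, e1]

lemma evalZ_polyDiff (j : Fin n) (Q : MvPolynomial (Fin n) ℂ) :
    (fun k : Fin n → ℤ => eval (fun i => (k i : ℂ)) (polyDiff j Q)) =
      discDiff j (fun k : Fin n → ℤ => eval (fun i => (k i : ℂ)) Q) := by
  funext k
  simp only [polyDiff, discDiff, map_sub, eval_shiftOp]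
  have : (fun i => ((k - Pi.single j 1 : Fin n → ℤ) i : ℂ)) =
      fun i => (k i : ℂ) - if i = j then 1 else 0 := by
    funext i
    by_cases h : i = j <;> simp [h, Pi.single_apply]
  rw [this]

lemma evalZ_polyDiff_iter (j : Fin n) (e : ℕ) (Q : MvPolynomial (Fin n) ℂ) :
    (fun k : Fin n → ℤ => eval (fun i => (k i : ℂ)) ((polyDiff j)^[e] Q)) =
      (discDiff j)^[e] (fun k : Fin n → ℤ => eval (fun i => (k i : ℂ)) Q) := by
  induction e with
  | zero => simp
  | succ m ih =>
    rw [Function.iterate_succ_apply', Function.iterate_succ_apply', evalZ_polyDiff, ih]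

lemma evalZ_polyDiffMulti (γ : Fin n → ℕ) (Q : MvPolynomial (Fin n) ℂ) :
    (fun k : Fin n → ℤ => eval (fun i => (k i : ℂ)) (polyDiffMulti γ Q)) =
      discDiffMulti γ (fun k : Fin n → ℤ => eval (fun i => (k i : ℂ)) Q) := by
  unfold polyDiffMulti discDiffMulti
  induction (List.finRange n) with
  | nil => simp
  | cons j l ih =>
    simp only [List.foldr_cons, Function.comp_apply]
    rw [evalZ_polyDiff_iter, ih]

lemma td_X_pow_sub (j : Fin n) (e : ℕ) :
    ((X j : MvPolynomial (Fin n) ℂ) ^ e - (X j - 1) ^ e).totalDegree ≤ e - 1 := by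
  rcases Nat.eq_zero_or_pos e with he | he
  · simp [he]
  · have hc : Commute (X j : MvPolynomial (Fin n) ℂ) (-1) := Commute.all _ _
    rw [sub_eq_add_neg (X j) 1, hc.add_pow e, Finset.sum_range_succ]
    simp only [Nat.sub_self, pow_zero, Nat.choose_self, Nat.cast_one, mul_one]
    rw [add_comm, sub_add_cancel_left, totalDegree_neg]
    refine le_trans (totalDegree_finset_sum _ _) (Finset.sup_le fun m hm => ?_)
    have hm' : m ≤ e - 1 := Nat.le_sub_one_of_lt (Finset.mem_range.mp hm)
    have h1 : ((X j : MvPolynomial (Fin n) ℂ) ^ m).totalDegree ≤ m :=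
      le_of_eq (totalDegree_X_pow _ _)
    have h2 : (((-1 : MvPolynomial (Fin n) ℂ)) ^ (e - m)).totalDegree ≤ 0 := by
      refine le_trans (totalDegree_pow _ _) ?_
      simp [totalDegree_neg]
    have h3 : ((e.choose m : MvPolynomial (Fin n) ℂ)).totalDegree = 0 := by
      rw [← map_natCast (C : ℂ →+* MvPolynomial (Fin n) ℂ)]
      exact totalDegree_C _
    have h4 := totalDegree_mul ((X j : MvPolynomial (Fin n) ℂ) ^ m)
      ((-1 : MvPolynomial (Fin n) ℂ) ^ (e - m))
    have h5 := totalDegree_mul ((X j : MvPolynomial (Fin n) ℂ) ^ m * (-1) ^ (e - m))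
      ((e.choose m : MvPolynomial (Fin n) ℂ))
    omega

lemma shiftOp_monomial_of_zero (j : Fin n) (β : Fin n →₀ ℕ) (c : ℂ) (hβj : β j = 0) :
    shiftOp j (monomial β c) = monomial β c := by
  rw [shiftOp, aeval_monomial, algebraMap_eq, monomial_eq]
  congr 1
  apply Finsupp.prod_congr
  intro i hi
  have hij : i ≠ j := by
    intro h
    exact (Finsupp.mem_support_iff.mp hi) (h ▸ hβj)
  simp [hij]

lemma td_sub_shiftOp_monomial (j : Fin n) (β : Fin n →₀ ℕ) (c : ℂ) :
    ((monomial β c) - shiftOp j (monomial β c)).totalDegree ≤ (β.sum fun _ e => e) - 1 := by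
  rcases Nat.eq_zero_or_pos (β j) with hj | hj
  · rw [shiftOp_monomial_of_zero j β c hj, sub_self]
    simp
  · have hdecomp : (monomial β c : MvPolynomial (Fin n) ℂ)
        = monomial (β.erase j) c * X j ^ (β j) := by
      rw [X_pow_eq_monomial, monomial_mul, mul_one, Finsupp.erase_add_single]
    have hXj : shiftOp j (X j : MvPolynomial (Fin n) ℂ) = X j - 1 := by
      rw [shiftOp]; simp
    have hshift : shiftOp j (monomial β c : MvPolynomial (Fin n) ℂ)
        = monomial (β.erase j) c * (X j - 1) ^ (β j) := by
      rw [hdecomp, map_mul, map_pow, hXj,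
        shiftOp_monomial_of_zero j _ c (Finsupp.erase_same)]
    rw [hshift, hdecomp, ← mul_sub]
    have hsum : (β.sum fun _ e => e) = ((β.erase j).sum fun _ e => e) + β j := by
      conv_lhs => rw [← Finsupp.erase_add_single j β]
      rw [Finsupp.sum_add_index' (fun _ => rfl) (fun _ _ _ => rfl),
        Finsupp.sum_single_index rfl]
    have h1 : ((monomial (β.erase j) c : MvPolynomial (Fin n) ℂ)).totalDegree
        ≤ (β.erase j).sum fun _ e => e := totalDegree_monomial_le _ _
    have h2 := td_X_pow_sub j (β j)
    have h3 := totalDegree_mul (monomial (β.erase j) c : MvPolynomial (Fin n) ℂ)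
      ((X j) ^ (β j) - (X j - 1) ^ (β j))
    omega

lemma td_polyDiff (j : Fin n) (Q : MvPolynomial (Fin n) ℂ) :
    (polyDiff j Q).totalDegree ≤ Q.totalDegree - 1 := by
  rw [polyDiff]
  conv_lhs => rw [as_sum Q, map_sum, ← Finset.sum_sub_distrib]
  refine le_trans (totalDegree_finset_sum _ _) (Finset.sup_le fun β hβ => ?_)
  refine le_trans (td_sub_shiftOp_monomial j β _) ?_
  exact Nat.sub_le_sub_right (le_totalDegree hβ) 1

lemma td_polyDiff_iter (j : Fin n) (e : ℕ) (Q : MvPolynomial (Fin n) ℂ) :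
    ((polyDiff j)^[e] Q).totalDegree ≤ Q.totalDegree - e := by
  induction e with
  | zero => simp
  | succ m ih =>
    rw [Function.iterate_succ_apply']
    have := td_polyDiff j ((polyDiff j)^[m] Q)
    omega

lemma td_polyDiffMulti (γ : Fin n → ℕ) (Q : MvPolynomial (Fin n) ℂ) :
    (polyDiffMulti γ Q).totalDegree ≤ Q.totalDegree - ∑ i, γ i := by
  rw [polyDiffMulti, Fin.sum_univ_def]
  induction (List.finRange n) generalizing Q with
  | nil => simp
  | cons j l ih =>
    simp only [List.foldr_cons, List.map_cons, List.sum_cons]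
    have h1 := td_polyDiff_iter j (γ j) (List.foldr (fun j R => (polyDiff j)^[γ j] R) Q l)
    have h2 := ih Q
    omega

lemma sum_univ_eq_finsupp_sum (β : Fin n →₀ ℕ) :
    (∑ i, β i) = β.sum fun _ e => e := by
  rw [Finsupp.sum]
  exact (Finset.sum_subset (Finset.subset_univ _)
    (fun i _ hi => Finsupp.notMem_support_iff.mp hi)).symm

lemma eval_norm_le (Q : MvPolynomial (Fin n) ℂ) (t : ℕ) (ht : Q.totalDegree ≤ t) :
    ∃ C : ℝ, 0 < C ∧ ∀ x : Fin n → ℝ, 1 ≤ Real.sqrt (∑ i, x i ^ 2) →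
      ‖eval (fun i => (x i : ℂ)) Q‖ ≤ C * Real.sqrt (∑ i, x i ^ 2) ^ t := by
  refine ⟨(∑ β ∈ Q.support, ‖coeff β Q‖) + 1, by positivity, fun x hx => ?_⟩
  set M := Real.sqrt (∑ i, x i ^ 2) with hM
  have hM1 : (1:ℝ) ≤ M := hx
  have hxle : ∀ i, |x i| ≤ M := by
    intro i
    rw [hM, ← Real.sqrt_sq_eq_abs]
    apply Real.sqrt_le_sqrt
    exact Finset.single_le_sum (f := fun i => x i ^ 2) (fun i _ => sq_nonneg _)
      (Finset.mem_univ i)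
  rw [eval_eq']
  refine le_trans (norm_sum_le _ _) ?_
  have key : ∀ β ∈ Q.support, ‖coeff β Q * ∏ i, ((x i : ℂ)) ^ β i‖ ≤ ‖coeff β Q‖ * M ^ t := by
    intro β hβ
    rw [norm_mul]
    gcongr
    have h1 : ‖∏ i, ((x i : ℂ)) ^ β i‖ = ∏ i, |x i| ^ β i := by
      rw [norm_prod]
      congr 1; funext i
      rw [norm_pow, Complex.norm_real, Real.norm_eq_abs]
    rw [h1]
    calc ∏ i, |x i| ^ β i ≤ ∏ i, M ^ β i := by
          apply Finset.prod_le_prod (fun i _ => by positivity)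
          intro i _
          exact pow_le_pow_left₀ (abs_nonneg _) (hxle i) _
      _ = M ^ (∑ i, β i) := Finset.prod_pow_eq_pow_sum _ _ _
      _ ≤ M ^ t := by
          apply pow_le_pow_right₀ hM1
          rw [sum_univ_eq_finsupp_sum]
          exact le_trans (le_totalDegree hβ) ht
  refine le_trans (Finset.sum_le_sum key) ?_
  rw [← Finset.sum_mul]
  have : (0:ℝ) ≤ M ^ t := by positivity
  nlinarith [Finset.sum_nonneg (fun β (_ : β ∈ Q.support) => norm_nonneg (coeff β Q))]

lemma eval_homog_scale (d : ℕ) (P : MvPolynomial (Fin n) ℂ) (r : ℝ) (y : Fin n → ℝ) :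
    eval (fun i => ((r * y i : ℝ) : ℂ)) (homogeneousComponent d P)
      = (r : ℂ) ^ d * eval (fun i => (y i : ℂ)) (homogeneousComponent d P) := by
  set H := homogeneousComponent d P with hH
  rw [eval_eq', eval_eq', Finset.mul_sum]
  refine Finset.sum_congr rfl fun β hβ => ?_
  have h1 : coeff β H ≠ 0 := mem_support_iff.mp hβ
  have h2 : β.degree = d := by
    by_contra hne
    rw [hH, coeff_homogeneousComponent, if_neg hne] at h1
    exact h1 rfl
  have hdeg : (∑ i, β i) = d := by
    rw [← h2, Finsupp.degree]
    exact (Finset.sum_subset (Finset.subset_univ _)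
      (fun i _ hi => Finsupp.notMem_support_iff.mp hi)).symm
  have : (∏ i, (((r * y i : ℝ) : ℂ)) ^ β i)
      = (r : ℂ) ^ d * ∏ i, ((y i : ℂ)) ^ β i := by
    push_cast
    rw [← hdeg, ← Finset.prod_pow_eq_pow_sum, ← Finset.prod_mul_distrib]
    congr 1; funext i
    rw [mul_pow]
  rw [this]; ring

lemma td_sub_homog (P : MvPolynomial (Fin n) ℂ) :
    (P - homogeneousComponent P.totalDegree P).totalDegree ≤ P.totalDegree - 1 := by
  rw [totalDegree]
  refine Finset.sup_le fun β hβ => ?_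
  have h1 : coeff β (P - homogeneousComponent P.totalDegree P) ≠ 0 := mem_support_iff.mp hβ
  rw [coeff_sub, coeff_homogeneousComponent] at h1
  have hdeg : β.degree = β.sum fun _ e => e := rfl
  by_contra hgt
  push_neg at hgt
  rcases lt_or_ge P.totalDegree (β.sum fun _ e => e) with hlt | hle
  · have hc : coeff β P = 0 := coeff_eq_zero_of_totalDegree_lt (by
      rw [show (∑ i ∈ β.support, β i) = β.sum fun _ e => e from rfl]
      exact hlt)
    rw [if_neg (by rw [hdeg]; omega), hc, sub_zero] at h1
    exact h1 rfl
  · have hs : (β.sum fun _ e => e) = P.totalDegree := by omega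
    rw [if_pos (by rw [hdeg, hs]), sub_self] at h1
    exact h1 rfl

lemma elliptic_lower (P : MvPolynomial (Fin n) ℂ) (hP : IsElliptic P)
    (hd : P.totalDegree ≠ 0) :
    ∃ c : ℝ, 0 < c ∧ ∃ R : ℝ, 1 ≤ R ∧ ∀ x : Fin n → ℝ,
      R ≤ Real.sqrt (∑ i, x i ^ 2) →
      c * Real.sqrt (∑ i, x i ^ 2) ^ P.totalDegree ≤ ‖eval (fun i => (x i : ℂ)) P‖ := by
  classical
  set d := P.totalDegree with hdd
  set H := homogeneousComponent d P with hH
  -- Fin n is nonempty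
  have hPne : P ≠ 0 := by
    intro h; apply hd; rw [hdd, h, totalDegree_zero]
  have hsupp : P.support.Nonempty := by
    rw [Finset.nonempty_iff_ne_empty]
    intro h
    exact hPne (support_eq_empty.mp h)
  obtain ⟨β, hβmem, hβeq⟩ := Finset.exists_mem_eq_sup P.support hsupp
    (fun s => s.sum fun _ e => e)
  have hβne : β ≠ 0 := by
    intro h
    apply hd
    rw [hdd, totalDegree, hβeq, h]
    simp
  obtain ⟨i₀, hi₀⟩ := Finsupp.support_nonempty_iff.mpr hβne
  haveI : Nonempty (Fin n) := ⟨i₀⟩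
  -- minimum of ‖H‖ on the sphere
  set g : EuclideanSpace ℝ (Fin n) → ℝ :=
    fun ξ => ‖eval (fun i => (ξ i : ℂ)) H‖ with hg
  have hcont : Continuous g := by
    apply Continuous.norm
    have h1 : Continuous fun ξ : EuclideanSpace ℝ (Fin n) => (fun i => (ξ i : ℂ)) :=
      continuous_pi fun i => Complex.continuous_ofReal.comp (EuclideanSpace.proj i).continuous
    exact (MvPolynomial.continuous_eval H).comp h1
  have hsph : (Metric.sphere (0 : EuclideanSpace ℝ (Fin n)) 1).Nonempty := by
    refine ⟨EuclideanSpace.single i₀ 1, ?_⟩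
    rw [mem_sphere_zero_iff_norm, EuclideanSpace.norm_single, norm_one]
  obtain ⟨ξ₀, hξ₀mem, hmin⟩ := (isCompact_sphere (0 : EuclideanSpace ℝ (Fin n)) 1).exists_isMinOn
    hsph hcont.continuousOn
  have hξ₀norm : ‖ξ₀‖ = 1 := mem_sphere_zero_iff_norm.mp hξ₀mem
  have hc₀ : 0 < g ξ₀ := by
    rw [hg]
    refine norm_pos_iff.mpr ?_
    exact hP ξ₀ (by intro h; rw [h, norm_zero] at hξ₀norm; norm_num at hξ₀norm)
  set c₀ := g ξ₀ with hc₀d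
  -- upper bound for the tail
  obtain ⟨C₁, hC₁pos, hC₁⟩ := eval_norm_le (P - H) (d - 1) (td_sub_homog P)
  refine ⟨c₀ / 2, by positivity, max 1 (2 * C₁ / c₀), le_max_left _ _, fun x hx => ?_⟩
  set M := Real.sqrt (∑ i, x i ^ 2) with hM
  have hM1 : (1:ℝ) ≤ M := le_trans (le_max_left _ _) hx
  have hM0 : 0 < M := lt_of_lt_of_le one_pos hM1
  have hMC : 2 * C₁ / c₀ ≤ M := le_trans (le_max_right _ _) hx
  set xE : EuclideanSpace ℝ (Fin n) := WithLp.toLp 2 x with hxE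
  have hnormx : ‖xE‖ = M := by
    rw [EuclideanSpace.norm_eq, hM]
    congr 1
    refine Finset.sum_congr rfl fun i _ => ?_
    rw [Real.norm_eq_abs, sq_abs]
  set ξ : EuclideanSpace ℝ (Fin n) := M⁻¹ • xE with hξd
  have hξsph : ξ ∈ Metric.sphere (0 : EuclideanSpace ℝ (Fin n)) 1 := by
    rw [mem_sphere_zero_iff_norm, hξd, norm_smul, hnormx, norm_inv, Real.norm_eq_abs,
      abs_of_pos hM0, inv_mul_cancel₀ (ne_of_gt hM0)]
  -- scaling
  have hscale : eval (fun i => (x i : ℂ)) H = (M : ℂ) ^ d * eval (fun i => (ξ i : ℂ)) H := by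
    have hxi : (fun i => (x i : ℂ)) = fun i => ((M * ξ i : ℝ) : ℂ) := by
      funext i
      have : ξ i = M⁻¹ * x i := rfl
      rw [this, ← mul_assoc, mul_inv_cancel₀ (ne_of_gt hM0), one_mul]
    rw [hxi, hH]
    exact eval_homog_scale d P M (fun i => ξ i)
  have hHlow : c₀ * M ^ d ≤ ‖eval (fun i => (x i : ℂ)) H‖ := by
    rw [hscale, norm_mul, norm_pow, Complex.norm_real, Real.norm_eq_abs, abs_of_pos hM0]
    have : c₀ ≤ g ξ := hmin hξsph
    have hMd : (0:ℝ) < M ^ d := by positivity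
    calc c₀ * M ^ d ≤ g ξ * M ^ d := by nlinarith
      _ = M ^ d * ‖eval (fun i => (ξ i : ℂ)) H‖ := by rw [hg]; ring
  -- tail bound
  have htail : ‖eval (fun i => (x i : ℂ)) (P - H)‖ ≤ C₁ * M ^ (d - 1) := hC₁ x hM1
  -- triangle
  have htri : ‖eval (fun i => (x i : ℂ)) H‖ - ‖eval (fun i => (x i : ℂ)) (P - H)‖
      ≤ ‖eval (fun i => (x i : ℂ)) P‖ := by
    have h1 : eval (fun i => (x i : ℂ)) H
        = eval (fun i => (x i : ℂ)) P - eval (fun i => (x i : ℂ)) (P - H) := by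
      rw [map_sub]; ring
    have h2 := norm_sub_le (eval (fun i => (x i : ℂ)) P)
      (eval (fun i => (x i : ℂ)) (P - H))
    rw [h1]
    linarith
  -- finish
  have hMd : M ^ d = M * M ^ (d - 1) := by
    rw [← pow_succ']
    congr 1
    omega
  have hkey : C₁ * M ^ (d - 1) ≤ c₀ / 2 * M ^ d := by
    rw [hMd]
    have hMd1 : (0:ℝ) < M ^ (d - 1) := by positivity
    have : 2 * C₁ ≤ c₀ * M := by
      rw [div_le_iff₀ (by positivity)] at hMC
      linarith [hMC]
    nlinarith
  linarith [hHlow, htail, htri, hkey]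

lemma discDiffMulti_of_zero {V : Type*} [AddCommGroup V] (γ : Fin n → ℕ) (h : ∀ j, γ j = 0) :
    discDiffMulti (n := n) (V := V) γ = id := by
  unfold discDiffMulti
  induction (List.finRange n) with
  | nil => rfl
  | cons j l ih => simp [List.foldr_cons, h j, ih]

lemma finite_small (R : ℝ) :
    {k : Fin n → ℤ | Real.sqrt (∑ i, ((k i : ℝ)) ^ 2) < R}.Finite := by
  have hsub : {k : Fin n → ℤ | Real.sqrt (∑ i, ((k i : ℝ)) ^ 2) < R} ⊆
      Set.pi Set.univ (fun _ : Fin n => Set.Icc (-(⌈R⌉ : ℤ)) ⌈R⌉) := by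
    intro k hk
    simp only [Set.mem_setOf_eq] at hk
    intro i _
    have h1 : |(k i : ℝ)| ≤ R := by
      rw [← Real.sqrt_sq_eq_abs]
      refine le_trans (Real.sqrt_le_sqrt ?_) hk.le
      exact Finset.single_le_sum (f := fun i => ((k i : ℝ)) ^ 2)
        (fun _ _ => sq_nonneg _) (Finset.mem_univ i)
    have h2 : |(k i : ℝ)| ≤ (⌈R⌉ : ℝ) := le_trans h1 (Int.le_ceil R)
    rw [abs_le] at h2
    constructor
    · exact_mod_cast h2.1
    · exact_mod_cast h2.2
  exact Set.Finite.subset (Set.Finite.pi (fun _ => Set.finite_Icc _ _)) hsub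

end

/-- Discrete estimate for elliptic polynomials. -/
theorem discDiffMulti_elliptic_estimate {n : ℕ} (P : MvPolynomial (Fin n) ℂ)
    (hP : IsElliptic P) (α : Fin n → ℕ) (hα : (∑ i, α i) ≤ P.totalDegree) :
    ∃ C : ℝ, 0 < C ∧ ∃ G : Finset (Fin n → ℤ),
      ∀ k : Fin n → ℤ, k ∉ G →
        Real.sqrt (∑ i, ((k i : ℝ)) ^ 2) ^ (∑ i, α i) *
          ‖discDiffMulti α (fun m => MvPolynomial.eval (fun i => (m i : ℂ)) P) k‖ ≤
            C * ‖MvPolynomial.eval (fun i => (k i : ℂ)) P‖ := by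
  classical
  by_cases hd0 : P.totalDegree = 0
  · have hm : (∑ i, α i) = 0 := Nat.le_zero.mp (hd0 ▸ hα)
    refine ⟨1, one_pos, ∅, fun k _ => ?_⟩
    rw [hm, pow_zero, one_mul, one_mul,
      discDiffMulti_of_zero α (fun j => Finset.sum_eq_zero_iff.mp hm j (Finset.mem_univ j))]
    exact le_refl _
  · obtain ⟨c, hc, R, hR1, hlow⟩ := elliptic_lower P hP hd0
    set d := P.totalDegree with hdd
    set m := ∑ i, α i with hmd
    set D := polyDiffMulti α P with hD
    have htd : D.totalDegree ≤ d - m := td_polyDiffMulti α P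
    obtain ⟨C₂, hC₂pos, hC₂⟩ := eval_norm_le D (d - m) htd
    refine ⟨C₂ / c, by positivity, (finite_small R).toFinset, fun k hk => ?_⟩
    have hkR : R ≤ Real.sqrt (∑ i, ((k i : ℝ)) ^ 2) := by
      by_contra h
      exact hk ((Set.Finite.mem_toFinset _).mpr (by push_neg at h; exact h))
    set M := Real.sqrt (∑ i, ((k i : ℝ)) ^ 2) with hM
    have hM1 : (1:ℝ) ≤ M := le_trans hR1 hkR
    have hM0 : (0:ℝ) < M := lt_of_lt_of_le one_pos hM1
    have hcast : (fun i => ((k i : ℝ) : ℂ)) = fun i => ((k i : ℤ) : ℂ) := by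
      funext i; push_cast; rfl
    have hdisc : discDiffMulti α (fun m => MvPolynomial.eval (fun i => ((m i : ℤ) : ℂ)) P) k
        = eval (fun i => ((k i : ℤ) : ℂ)) D := by
      rw [hD, ← evalZ_polyDiffMulti α P]
    have hub : ‖eval (fun i => ((k i : ℤ) : ℂ)) D‖ ≤ C₂ * M ^ (d - m) := by
      have := hC₂ (fun i => (k i : ℝ)) hM1
      rw [hcast] at this
      exact this
    have hlb : c * M ^ d ≤ ‖eval (fun i => ((k i : ℤ) : ℂ)) P‖ := by
      have := hlow (fun i => (k i : ℝ)) hkR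
      rw [hcast] at this
      exact this
    rw [hdisc]
    have hMpow : M ^ m * M ^ (d - m) = M ^ d := by
      rw [← pow_add]
      congr 1
      omega
    calc M ^ m * ‖eval (fun i => ((k i : ℤ) : ℂ)) D‖
        ≤ M ^ m * (C₂ * M ^ (d - m)) := by
          have : (0:ℝ) ≤ M ^ m := by positivity
          nlinarith [norm_nonneg (eval (fun i => ((k i : ℤ) : ℂ)) D)]
      _ = C₂ * M ^ d := by rw [← hMpow]; ring
      _ = (C₂ / c) * (c * M ^ d) := by field_simp
      _ ≤ (C₂ / c) * ‖eval (fun i => ((k i : ℤ) : ℂ)) P‖ := by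
          have : (0:ℝ) < C₂ / c := by positivity
          nlinarith [hlb]
end

section
/- Strict 1-regularity of quotients of elliptic polynomials: Let P, Q, N be polynomials in n variables with complex coefficients such that P and Q are elliptic, deg N ≤ deg P, and Q(k) ≠ 0 for all k ∈ ℤⁿ. Define a_k := N(k)/Q(k) and b_k := P(k)/Q(k) for k ∈ ℤⁿ. Then the pair (a_k, b_k)_{k ∈ ℤⁿ} is strictly 1-regular: for every multi-index γ ∈ ℕ₀ⁿ with 0 ≤ γ ≤ (1,…,1) there exist a finite set K ⊂ ℤⁿ and a constant C > 0 such that |k|^{|γ|} · max{ |Δ^γ a(k)|, |Δ^γ b(k)| } ≤ C |b_k| for all k ∈ ℤⁿ \ K. -/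
open scoped BigOperators

open MvPolynomial

namespace EllAux
variable {n : ℕ}

def zc (k : Fin n → ℤ) : Fin n → ℂ := fun i => (k i : ℂ)

lemma aeval_eq_eval (x : Fin n → ℂ) (P : MvPolynomial (Fin n) ℂ) :
    aeval x P = eval x P := by
  rw [aeval_def, Algebra.algebraMap_self]; rfl

noncomputable def T (v : Fin n → ℕ) (P : MvPolynomial (Fin n) ℂ) : MvPolynomial (Fin n) ℂ :=
  aeval (fun i => X i - C (v i : ℂ)) P

lemma eval_T (v : Fin n → ℕ) (P : MvPolynomial (Fin n) ℂ) (k : Fin n → ℤ) :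
    eval (zc k) (T v P) = eval (zc (fun i => k i - (v i : ℤ))) P := by
  rw [T, ← aeval_eq_eval, comp_aeval_apply, ← aeval_eq_eval]
  have hf : (fun i => (aeval (zc k)) (X i - C ((v i : ℂ)))) = zc (fun i => k i - (v i : ℤ)) := by
    funext i; simp [zc]
  rw [hf]

lemma T_T (v w : Fin n → ℕ) (P : MvPolynomial (Fin n) ℂ) :
    T w (T v P) = T (v + w) P := by
  rw [T, T, comp_aeval_apply, T]
  have hf : (fun i => (aeval fun i => X i - C ((w i : ℂ))) (X i - C ((v i : ℂ))))
      = fun i => X (σ := Fin n) i - C (((v + w) i : ℕ) : ℂ) := by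
    funext i
    push_cast
    simp [sub_sub]; ring
  rw [hf]

lemma T_C (v : Fin n → ℕ) (c : ℂ) : T v (C c) = C c := by
  simp [T]

end EllAux

namespace EllAux
variable {n : ℕ}
open Finset

lemma prod_diff_deg (s : Finset (Fin n)) (p q : Fin n → MvPolynomial (Fin n) ℂ)
    (d : Fin n → ℕ)
    (hp : ∀ i ∈ s, (p i).totalDegree ≤ d i)
    (hd : ∀ i ∈ s, p i - q i = 0 ∨ (p i - q i).totalDegree + 1 ≤ d i)
    (hq : ∀ i ∈ s, (q i).totalDegree ≤ d i) :
    (∏ i ∈ s, p i) - (∏ i ∈ s, q i) = 0 ∨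
      ((∏ i ∈ s, p i) - ∏ i ∈ s, q i).totalDegree + 1 ≤ ∑ i ∈ s, d i := by
  classical
  induction s using Finset.induction with
  | empty => simp
  | @insert a s ha ih =>
    have IH := ih (fun i hi => hp i (mem_insert_of_mem hi))
      (fun i hi => hd i (mem_insert_of_mem hi)) (fun i hi => hq i (mem_insert_of_mem hi))
    have hda := hd a (mem_insert_self a s)
    have hpa := hp a (mem_insert_self a s)
    have hqs : (∏ i ∈ s, q i).totalDegree ≤ ∑ i ∈ s, d i :=
      (MvPolynomial.totalDegree_finset_prod s q).trans
        (Finset.sum_le_sum fun i hi => hq i (mem_insert_of_mem hi))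
    rw [prod_insert ha, prod_insert ha, sum_insert ha]
    have key : p a * ∏ i ∈ s, p i - q a * ∏ i ∈ s, q i
        = p a * ((∏ i ∈ s, p i) - ∏ i ∈ s, q i) + (p a - q a) * ∏ i ∈ s, q i := by ring
    rw [key]
    by_cases hE : p a * ((∏ i ∈ s, p i) - ∏ i ∈ s, q i) + (p a - q a) * ∏ i ∈ s, q i = 0
    · exact Or.inl hE
    right
    have hDpos : 1 ≤ d a + ∑ i ∈ s, d i := by
      rcases IH with h0 | hbd
      · rcases hda with h0' | hbd'
        · exfalso; apply hE; rw [h0, h0']; ring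
        · omega
      · omega
    have h1 : (p a * ((∏ i ∈ s, p i) - ∏ i ∈ s, q i)).totalDegree + 1 ≤ d a + ∑ i ∈ s, d i := by
      rcases IH with h0 | hbd
      · rw [h0, mul_zero]; simpa using hDpos
      · have := MvPolynomial.totalDegree_mul (p a) ((∏ i ∈ s, p i) - ∏ i ∈ s, q i)
        omega
    have h2 : ((p a - q a) * ∏ i ∈ s, q i).totalDegree + 1 ≤ d a + ∑ i ∈ s, d i := by
      rcases hda with h0 | hbd
      · rw [h0, zero_mul]; simpa using hDpos
      · have := MvPolynomial.totalDegree_mul (p a - q a) (∏ i ∈ s, q i)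
        omega
    calc (p a * ((∏ i ∈ s, p i) - ∏ i ∈ s, q i) + (p a - q a) * ∏ i ∈ s, q i).totalDegree + 1
        ≤ max ((p a * ((∏ i ∈ s, p i) - ∏ i ∈ s, q i)).totalDegree + 1)
            (((p a - q a) * ∏ i ∈ s, q i).totalDegree + 1) := by
          have := MvPolynomial.totalDegree_add (p a * ((∏ i ∈ s, p i) - ∏ i ∈ s, q i))
            ((p a - q a) * ∏ i ∈ s, q i)
          omega
      _ ≤ d a + ∑ i ∈ s, d i := max_le h1 h2

end EllAux

namespace EllAux
variable {n : ℕ}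
open Finset MvPolynomial

lemma deg_X_sub_C (i : Fin n) (c : ℂ) :
    ((X i - C c : MvPolynomial (Fin n) ℂ)).totalDegree ≤ 1 := by
  refine (MvPolynomial.totalDegree_sub _ _).trans (max_le ?_ ?_)
  · rw [MvPolynomial.totalDegree_X]
  · rw [MvPolynomial.totalDegree_C]; omega

lemma pow_diff_deg (i : Fin n) (c : ℂ) (e : ℕ) :
    (X i - C c)^e - X i^e = 0 ∨ (((X i - C c)^e - X i^e) : MvPolynomial (Fin n) ℂ).totalDegree + 1 ≤ e := by
  induction e with
  | zero => left; simp
  | succ e ih =>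
    by_cases hE : ((X i - C c)^(e+1) - X i^(e+1) : MvPolynomial (Fin n) ℂ) = 0
    · exact Or.inl hE
    right
    have key : ((X i - C c)^(e+1) - X i^(e+1) : MvPolynomial (Fin n) ℂ)
        = (X i - C c) * ((X i - C c)^e - X i ^ e) + (- C c) * X i ^ e := by ring
    rw [key]
    have hXC := deg_X_sub_C i c
    have hXe : ((X i ^ e : MvPolynomial (Fin n) ℂ)).totalDegree ≤ e := by
      refine (MvPolynomial.totalDegree_pow _ _).trans ?_
      simp [MvPolynomial.totalDegree_X]
    have h1 : ((X i - C c) * ((X i - C c)^e - X i ^ e) : MvPolynomial (Fin n) ℂ).totalDegree + 1 ≤ e + 1 := by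
      rcases ih with h0 | hbd
      · rw [h0, mul_zero]; simp
      · have := MvPolynomial.totalDegree_mul (X i - C c) ((X i - C c)^e - X i ^ e)
        omega
    have h2 : ((- C c) * X i ^ e : MvPolynomial (Fin n) ℂ).totalDegree + 1 ≤ e + 1 := by
      have := MvPolynomial.totalDegree_mul (- C c : MvPolynomial (Fin n) ℂ) (X i ^ e)
      have hc : ((- C c : MvPolynomial (Fin n) ℂ)).totalDegree = 0 := by
        rw [← MvPolynomial.C_neg, MvPolynomial.totalDegree_C]
      omega
    have := MvPolynomial.totalDegree_add ((X i - C c) * ((X i - C c)^e - X i ^ e) : MvPolynomial (Fin n) ℂ)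
      ((- C c) * X i ^ e)
    omega

lemma T_monomial (v : Fin n → ℕ) (m : Fin n →₀ ℕ) (c : ℂ) :
    T v (monomial m c) = C c * m.prod fun i e => (X i - C (v i : ℂ))^e := by
  rw [T, aeval_monomial]
  congr 1

lemma eq_C_of_deg_zero {P : MvPolynomial (Fin n) ℂ} (h : P.totalDegree = 0) :
    P = C (coeff 0 P) := by
  ext m
  by_cases hm : m = 0
  · simp [hm]
  · rw [MvPolynomial.coeff_C, if_neg (Ne.symm hm)]
    by_contra hc
    have hmem : m ∈ P.support := MvPolynomial.mem_support_iff.mpr hc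
    have := (MvPolynomial.totalDegree_eq_zero_iff _ P).mp h m hmem
    exact hm (Finsupp.ext this)

lemma Tdiff_deg (v : Fin n → ℕ) (P : MvPolynomial (Fin n) ℂ) :
    (T v P - P).totalDegree ≤ P.totalDegree - 1 := by
  classical
  conv_lhs => rw [P.as_sum]
  rw [T, map_sum, ← Finset.sum_sub_distrib]
  refine (MvPolynomial.totalDegree_finset_sum _ _).trans (Finset.sup_le ?_)
  intro m hm
  have hmsum : (m.sum fun _ e => e) ≤ P.totalDegree := MvPolynomial.le_totalDegree hm
  have hrfl : (aeval fun i => X i - C ((v i : ℕ) : ℂ)) ((monomial m) (coeff m P))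
      = T v ((monomial m) (coeff m P)) := rfl
  rw [hrfl, T_monomial, monomial_eq, ← mul_sub]
  have hdeg := MvPolynomial.totalDegree_mul (C (coeff m P))
    ((m.prod fun i e => (X i - C (v i : ℂ))^e) - m.prod fun i e => (X i : MvPolynomial (Fin n) ℂ) ^ e)
  rw [MvPolynomial.totalDegree_C] at hdeg
  have hprod := prod_diff_deg m.support (fun i => (X i - C (v i : ℂ))^(m i))
    (fun i => X i ^ (m i)) (fun i => m i)
    (fun i _ => by
      refine (MvPolynomial.totalDegree_pow _ _).trans ?_
      have : ((X i - C (v i : ℂ) : MvPolynomial (Fin n) ℂ)).totalDegree ≤ 1 :=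
        deg_X_sub_C i _
      calc (m i) * ((X i - C (v i : ℂ) : MvPolynomial (Fin n) ℂ)).totalDegree ≤ m i * 1 :=
            Nat.mul_le_mul_left _ this
        _ = m i := Nat.mul_one _)
    (fun i _ => pow_diff_deg i _ _)
    (fun i _ => by
      refine (MvPolynomial.totalDegree_pow _ _).trans ?_
      simp [MvPolynomial.totalDegree_X])
  have hsum_eq : (∑ i ∈ m.support, m i) = m.sum fun _ e => e := rfl
  rw [Finsupp.prod, Finsupp.prod] at *
  rcases hprod with h0 | hbd
  · rw [h0] at hdeg ⊢
    simp
  · omega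

lemma T_deg_le (v : Fin n → ℕ) (P : MvPolynomial (Fin n) ℂ) :
    (T v P).totalDegree ≤ P.totalDegree := by
  have h1 := Tdiff_deg v P
  have h2 := MvPolynomial.totalDegree_add (T v P - P) P
  rw [sub_add_cancel] at h2
  omega

lemma Tdiff_int (v : Fin n → ℕ) (P : MvPolynomial (Fin n) ℂ) :
    T v P - P = 0 ∨ (((T v P - P).totalDegree : ℤ) ≤ (P.totalDegree : ℤ) - 1) := by
  by_cases h0 : P.totalDegree = 0
  · left
    have hC := eq_C_of_deg_zero h0
    rw [hC, T_C, sub_self]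
  · right
    have := Tdiff_deg v P
    omega

end EllAux

namespace EllAux
variable {n : ℕ}
open Finset MvPolynomial

lemma eval_norm_upper (P : MvPolynomial (Fin n) ℂ) :
    ∃ C : ℝ, 0 < C ∧ ∀ (z : Fin n → ℂ) (t : ℝ), 1 ≤ t → (∀ i, ‖z i‖ ≤ t) →
      ‖eval z P‖ ≤ C * t ^ P.totalDegree := by
  classical
  refine ⟨(∑ m ∈ P.support, ‖coeff m P‖) + 1, by positivity, fun z t ht hz => ?_⟩
  have ht0 : (0:ℝ) ≤ t := le_trans zero_le_one ht
  rw [eval_eq]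
  refine (norm_sum_le _ _).trans ?_
  have hterm : ∀ m ∈ P.support,
      ‖coeff m P * ∏ i ∈ m.support, z i ^ m i‖ ≤ ‖coeff m P‖ * t ^ P.totalDegree := by
    intro m hm
    rw [norm_mul]
    refine mul_le_mul_of_nonneg_left ?_ (norm_nonneg _)
    calc ‖∏ i ∈ m.support, z i ^ m i‖ ≤ ∏ i ∈ m.support, ‖z i ^ m i‖ := norm_prod_le _ _
      _ ≤ ∏ i ∈ m.support, t ^ m i := by
          refine Finset.prod_le_prod (fun i _ => norm_nonneg _) (fun i _ => ?_)
          rw [norm_pow]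
          exact pow_le_pow_left₀ (norm_nonneg _) (hz i) _
      _ = t ^ (∑ i ∈ m.support, m i) := Finset.prod_pow_eq_pow_sum _ _ _
      _ ≤ t ^ P.totalDegree := by
          refine pow_le_pow_right₀ ht ?_
          exact MvPolynomial.le_totalDegree hm
  calc (∑ m ∈ P.support, ‖coeff m P * ∏ i ∈ m.support, z i ^ m i‖)
      ≤ ∑ m ∈ P.support, ‖coeff m P‖ * t ^ P.totalDegree := Finset.sum_le_sum hterm
    _ = (∑ m ∈ P.support, ‖coeff m P‖) * t ^ P.totalDegree := by rw [← Finset.sum_mul]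
    _ ≤ ((∑ m ∈ P.support, ‖coeff m P‖) + 1) * t ^ P.totalDegree := by
        have : (0:ℝ) ≤ t ^ P.totalDegree := by positivity
        nlinarith

lemma homog_eval_smul (d : ℕ) (H : MvPolynomial (Fin n) ℂ) (hH : H.IsHomogeneous d)
    (c : ℂ) (z : Fin n → ℂ) :
    eval (fun i => c * z i) H = c ^ d * eval z H := by
  classical
  rw [eval_eq, eval_eq, Finset.mul_sum]
  refine Finset.sum_congr rfl fun m hm => ?_
  have hdeg : (Finsupp.weight 1) m = d := hH (MvPolynomial.mem_support_iff.mp hm)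
  have hdeg' : (∑ i ∈ m.support, m i) = d := by
    simpa [Finsupp.weight_apply, Finsupp.sum] using hdeg
  rw [← hdeg']
  rw [← Finset.prod_pow_eq_pow_sum]
  rw [Finset.prod_congr rfl (fun i (_ : i ∈ m.support) => mul_pow c (z i) (m i)),
    Finset.prod_mul_distrib]
  ring

end EllAux


namespace EllAux
variable {n : ℕ}
open Finset MvPolynomial

lemma cont_eval (p : MvPolynomial (Fin n) ℂ) :
    Continuous fun z : Fin n → ℂ => eval z p := by
  induction p using MvPolynomial.induction_on with
  | C a => simpa using continuous_const
  | add p q hp hq => simp only [map_add]; exact hp.add hq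
  | mul_X p i hp => simp only [map_mul, eval_X]; exact hp.mul (continuous_apply i)

lemma lowOrder_deg (P : MvPolynomial (Fin n) ℂ) :
    (P - homogeneousComponent P.totalDegree P).totalDegree ≤ P.totalDegree - 1 := by
  classical
  set D := P.totalDegree with hD
  refine Finset.sup_le ?_
  intro m hm
  have hco : coeff m (P - homogeneousComponent D P) ≠ 0 := MvPolynomial.mem_support_iff.mp hm
  rw [MvPolynomial.coeff_sub, coeff_homogeneousComponent] at hco
  by_cases hdeg : m.degree = D
  · simp [hdeg] at hco
  · have hmP : m ∈ P.support := by
      rw [MvPolynomial.mem_support_iff]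
      intro h0
      simp [h0] at hco
    have hle : (m.sum fun _ e => e) ≤ D := MvPolynomial.le_totalDegree hmP
    have hsum_deg : (m.sum fun _ e => e) = m.degree := rfl
    omega

lemma abs_coord_le_norm (x : EuclideanSpace ℝ (Fin n)) (i : Fin n) : |x i| ≤ ‖x‖ := by
  rw [EuclideanSpace.norm_eq, ← Real.sqrt_sq_eq_abs]
  refine Real.sqrt_le_sqrt ?_
  have : (x i) ^ 2 ≤ ∑ j, ‖x j‖ ^ 2 := by
    have := Finset.single_le_sum (f := fun j => ‖x j‖ ^ 2) (fun j _ => by positivity)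
      (Finset.mem_univ i)
    simpa [Real.norm_eq_abs, sq_abs] using this
  exact this

lemma elliptic_lower (hn : 0 < n) (P : MvPolynomial (Fin n) ℂ) (hP : IsElliptic P) :
    ∃ c : ℝ, 0 < c ∧ ∃ R : ℝ, 1 ≤ R ∧ ∀ x : EuclideanSpace ℝ (Fin n), R ≤ ‖x‖ →
      c * ‖x‖ ^ P.totalDegree ≤ ‖eval (fun i => (x i : ℂ)) P‖ := by
  classical
  set D := P.totalDegree with hD
  set H := homogeneousComponent D P with hH
  set L := P - H with hL
  have hcont : Continuous fun x : EuclideanSpace ℝ (Fin n) => ‖eval (fun i => (x i : ℂ)) H‖ := by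
    refine ((cont_eval H).comp ?_).norm
    exact continuous_pi fun i => Complex.continuous_ofReal.comp
      ((continuous_apply i).comp (PiLp.continuous_ofLp 2 _))
  have hsphere_compact : IsCompact (Metric.sphere (0 : EuclideanSpace ℝ (Fin n)) 1) :=
    isCompact_sphere _ _
  have hsphere_ne : (Metric.sphere (0 : EuclideanSpace ℝ (Fin n)) 1).Nonempty := by
    refine ⟨EuclideanSpace.single ⟨0, hn⟩ 1, ?_⟩
    simp [EuclideanSpace.norm_single]
  obtain ⟨x₀, hx₀mem, hx₀min⟩ :=
    hsphere_compact.exists_isMinOn hsphere_ne hcont.continuousOn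
  set m := ‖eval (fun i => (x₀ i : ℂ)) H‖ with hm
  have hx₀ne : x₀ ≠ 0 := by
    intro h0
    have := mem_sphere_zero_iff_norm.mp hx₀mem
    rw [h0] at this; simp at this
  have hmpos : 0 < m := by
    rw [hm]
    exact norm_pos_iff.mpr (hP x₀ hx₀ne)
  have hHlow : ∀ x : EuclideanSpace ℝ (Fin n), 1 ≤ ‖x‖ →
      m * ‖x‖ ^ D ≤ ‖eval (fun i => (x i : ℂ)) H‖ := by
    intro x hx
    have hxne : x ≠ 0 := by
      intro h0; rw [h0] at hx; simp at hx; linarith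
    have hrpos : (0:ℝ) < ‖x‖ := lt_of_lt_of_le zero_lt_one hx
    set u := ‖x‖⁻¹ • x with hu
    have humem : u ∈ Metric.sphere (0 : EuclideanSpace ℝ (Fin n)) 1 := by
      rw [mem_sphere_zero_iff_norm]
      exact norm_smul_inv_norm hxne
    have hxi : ∀ i, (x i : ℂ) = (‖x‖ : ℂ) * (u i : ℂ) := by
      intro i
      have hne : (‖x‖:ℂ) ≠ 0 := by exact_mod_cast ne_of_gt hrpos
      rw [hu, PiLp.smul_apply, smul_eq_mul]
      push_cast
      field_simp
    have heval : eval (fun i => (x i : ℂ)) H = (‖x‖ : ℂ) ^ D * eval (fun i => (u i : ℂ)) H := by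
      rw [show (fun i => (x i : ℂ)) = fun i => (‖x‖ : ℂ) * (u i : ℂ) from funext hxi]
      exact homog_eval_smul D H (homogeneousComponent_isHomogeneous D P) _ _
    rw [heval, norm_mul, norm_pow]
    have hnn : ‖(‖x‖ : ℂ)‖ = ‖x‖ := by
      rw [Complex.norm_real, Real.norm_eq_abs, abs_of_pos hrpos]
    rw [hnn, mul_comm m (‖x‖ ^ D)]
    exact mul_le_mul_of_nonneg_left (isMinOn_iff.mp hx₀min u humem) (by positivity)
  obtain ⟨CL, hCLpos, hCL⟩ := eval_norm_upper L
  by_cases hD0 : D = 0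
  · refine ⟨m, hmpos, 1, le_refl 1, fun x hx => ?_⟩
    have hPH : P = H := by
      rw [hH, hD0, homogeneousComponent_zero]
      exact eq_C_of_deg_zero (by rw [← hD]; exact hD0)
    rw [hD0, pow_zero, mul_one, hPH]
    simpa [hD0] using hHlow x hx
  · refine ⟨m / 2, by positivity, max 1 (2 * CL / m), le_max_left _ _, fun x hx => ?_⟩
    have hx1 : 1 ≤ ‖x‖ := le_trans (le_max_left _ _) hx
    have hx2 : 2 * CL / m ≤ ‖x‖ := le_trans (le_max_right _ _) hx
    have hxpos : (0:ℝ) < ‖x‖ := lt_of_lt_of_le zero_lt_one hx1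
    have hLbd : ‖eval (fun i => (x i : ℂ)) L‖ ≤ CL * ‖x‖ ^ L.totalDegree := by
      refine hCL _ _ hx1 fun i => ?_
      rw [Complex.norm_real, Real.norm_eq_abs]
      exact abs_coord_le_norm x i
    have hLD : L.totalDegree ≤ D - 1 := lowOrder_deg P
    have hLbd2 : ‖eval (fun i => (x i : ℂ)) L‖ ≤ CL * ‖x‖ ^ (D - 1) := by
      refine hLbd.trans (mul_le_mul_of_nonneg_left ?_ (le_of_lt hCLpos))
      exact pow_le_pow_right₀ hx1 hLD
    have hsplit : m * ‖x‖ ^ D - ‖eval (fun i => (x i : ℂ)) L‖ ≤ ‖eval (fun i => (x i : ℂ)) P‖ := by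
      have hHP : eval (fun i => (x i : ℂ)) H
          = eval (fun i => (x i : ℂ)) P - eval (fun i => (x i : ℂ)) L := by
        rw [hL, map_sub]; ring
      have h1 := hHlow x hx1
      rw [hHP] at h1
      have h2 := norm_sub_le (eval (fun i => (x i : ℂ)) P) (eval (fun i => (x i : ℂ)) L)
      linarith
    have hpowD : ‖x‖ ^ D = ‖x‖ ^ (D - 1) * ‖x‖ := by
      rw [← pow_succ]
      congr 1
      omega
    have hCLrD : CL * ‖x‖ ^ (D - 1) ≤ (m / 2) * ‖x‖ ^ D := by
      rw [hpowD, ← mul_assoc]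
      have hpow_pos : (0:ℝ) < ‖x‖ ^ (D - 1) := by positivity
      have hCLm : CL ≤ m / 2 * ‖x‖ := by
        rw [div_le_iff₀ hmpos] at hx2
        nlinarith
      calc CL * ‖x‖ ^ (D-1) ≤ (m/2*‖x‖) * ‖x‖^(D-1) := by nlinarith
        _ = m/2 * ‖x‖^(D-1) * ‖x‖ := by ring
    linarith

end EllAux


namespace EllAux
variable {n : ℕ}
open Finset MvPolynomial

noncomputable def Dl (l : List (Fin n)) (γ : Fin n → ℕ) :
    ((Fin n → ℤ) → ℂ) → ((Fin n → ℤ) → ℂ) :=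
  l.foldr (fun j F => (discDiff j)^[γ j] ∘ F) id

lemma sub_deg_int {u v : MvPolynomial (Fin n) ℂ} {M : ℤ}
    (hu : u = 0 ∨ (u.totalDegree : ℤ) ≤ M) (hv : v = 0 ∨ (v.totalDegree : ℤ) ≤ M) :
    u - v = 0 ∨ ((u - v).totalDegree : ℤ) ≤ M := by
  by_cases h : u - v = 0
  · exact Or.inl h
  right
  rcases hu with hu | hu
  · rcases hv with hv | hv
    · exact absurd (by rw [hu, hv, sub_zero]) h
    · rw [hu, zero_sub, MvPolynomial.totalDegree_neg]
      exact hv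
  · rcases hv with hv | hv
    · rw [hv, sub_zero]
      exact hu
    · have hd := MvPolynomial.totalDegree_sub u v
      rcases le_max_iff.mp hd with hle | hle
      · exact le_trans (by exact_mod_cast hle) hu
      · exact le_trans (by exact_mod_cast hle) hv

lemma T_zero (P : MvPolynomial (Fin n) ℂ) : T (0 : Fin n → ℕ) P = P := by
  have : (fun i => (X i - C (((0 : Fin n → ℕ) i : ℕ) : ℂ) : MvPolynomial (Fin n) ℂ))
      = fun i => (X i : MvPolynomial (Fin n) ℂ) := by
    funext i; simp
  rw [T, this]
  simp [aeval_X_left]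

lemma eval_msprod (Q : MvPolynomial (Fin n) ℂ) (ms : Multiset (Fin n → ℕ)) (k : Fin n → ℤ) :
    eval (zc k) ((ms.map (fun v => T v Q)).prod)
      = ((ms.map (fun v => eval (zc (fun i => k i - (v i : ℤ))) Q)).prod) := by
  rw [map_multiset_prod, Multiset.map_map]
  congr 1
  refine Multiset.map_congr rfl fun v _ => ?_
  exact eval_T v Q k

lemma msprod_ne_zero (Q : MvPolynomial (Fin n) ℂ) (hQ0 : ∀ k : Fin n → ℤ, eval (zc k) Q ≠ 0)
    (ms : Multiset (Fin n → ℕ)) (k : Fin n → ℤ) :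
    eval (zc k) ((ms.map (fun v => T v Q)).prod) ≠ 0 := by
  rw [eval_msprod]
  refine Multiset.prod_ne_zero ?_
  intro h0
  obtain ⟨v, _, hv⟩ := Multiset.mem_map.mp h0
  exact hQ0 _ hv

lemma deg_msprod (Q : MvPolynomial (Fin n) ℂ) (ms : Multiset (Fin n → ℕ)) :
    ((ms.map (fun v => T v Q)).prod).totalDegree ≤ Multiset.card ms * Q.totalDegree := by
  refine (MvPolynomial.totalDegree_multiset_prod _).trans ?_
  rw [Multiset.map_map]
  have := Multiset.sum_le_card_nsmul (ms.map (MvPolynomial.totalDegree ∘ fun v => T v Q))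
    Q.totalDegree (by
      intro x hx
      obtain ⟨v, _, hv⟩ := Multiset.mem_map.mp hx
      rw [← hv]
      exact T_deg_le v Q)
  simpa [Multiset.card_map, smul_eq_mul] using this

lemma T_msprod (v : Fin n → ℕ) (s : Multiset (MvPolynomial (Fin n) ℂ)) :
    T v s.prod = (s.map (T v)).prod := by
  rw [T, map_multiset_prod]
  rfl

lemma key_diff (Q Nm : MvPolynomial (Fin n) ℂ) (hQ0 : ∀ k : Fin n → ℤ, eval (zc k) Q ≠ 0)
    (l : List (Fin n)) (γ : Fin n → ℕ) (hγ : ∀ i, γ i ≤ 1) :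
    ∃ (A : MvPolynomial (Fin n) ℂ) (ms : Multiset (Fin n → ℕ)) (B : ℕ),
      (A = 0 ∨ (A.totalDegree : ℤ) ≤ (Nm.totalDegree : ℤ)
          + ((2:ℤ) ^ (l.map γ).sum - 1) * Q.totalDegree - (l.map γ).sum) ∧
      Multiset.card ms = 2 ^ (l.map γ).sum ∧
      (∀ v ∈ ms, ∀ i, v i ≤ B) ∧
      ∀ k : Fin n → ℤ,
        Dl l γ (fun k' => eval (zc k') Nm / eval (zc k') Q) k
          = eval (zc k) A / eval (zc k) ((ms.map (fun v => T v Q)).prod) := by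
  classical
  induction l with
  | nil =>
    refine ⟨Nm, {0}, 0, Or.inr (by simp), by simp, by simp, fun k => ?_⟩
    simp only [Dl, List.foldr_nil, id_eq]
    congr 1
    rw [show ({0} : Multiset (Fin n → ℕ)) = (0 : Fin n → ℕ) ::ₘ 0 from rfl]
    simp [T_zero]
  | cons j l ih =>
    obtain ⟨A, ms, B, hdeg, hcard, hB, hev⟩ := ih
    have hDl : Dl (j :: l) γ (fun k' => eval (zc k') Nm / eval (zc k') Q)
        = (discDiff j)^[γ j] (Dl l γ (fun k' => eval (zc k') Nm / eval (zc k') Q)) := rfl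
    rcases Nat.le_one_iff_eq_zero_or_eq_one.mp (hγ j) with hγj | hγj
    · refine ⟨A, ms, B, ?_, ?_, hB, fun k => ?_⟩
      · simpa [hγj] using hdeg
      · simpa [hγj] using hcard
      · rw [hDl, hγj, Function.iterate_zero, id_eq, hev k]
    · -- γ j = 1
      set Dp := (ms.map (fun v => T v Q)).prod with hDp
      set δ : Fin n → ℕ := Pi.single j 1 with hδ
      refine ⟨A * T δ Dp - Dp * T δ A, ms + ms.map (· + δ), B + 1, ?_, ?_, ?_, ?_⟩
      · -- degree bound
        rcases hdeg with hA0 | hAdeg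
        · left
          rw [hA0, zero_mul, T, map_zero, mul_zero, sub_zero]
        set s := (l.map γ).sum with hs
        have hDpdeg : Dp.totalDegree ≤ 2 ^ s * Q.totalDegree := by
          rw [hDp]
          simpa [hcard] using deg_msprod Q ms
        have hM : ∀ u : MvPolynomial (Fin n) ℂ, u = A * (T δ Dp - Dp) → True := fun _ _ => trivial
        have key1 : A * T δ Dp - Dp * T δ A
            = A * (T δ Dp - Dp) - Dp * (T δ A - A) := by ring
        rw [key1]
        have hsum : ((j :: l).map γ).sum = 1 + s := by simp [hγj, hs]
        rw [hsum]
        have h2p : (2:ℤ) ^ (1 + s) = 2 * 2 ^ s := by rw [pow_add, pow_one]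
        have hu : A * (T δ Dp - Dp) = 0 ∨
            ((A * (T δ Dp - Dp)).totalDegree : ℤ) ≤ (Nm.totalDegree : ℤ)
              + ((2:ℤ) ^ (1+s) - 1) * Q.totalDegree - (1+s) := by
          rcases Tdiff_int δ Dp with h0 | hDd
          · left; rw [h0, mul_zero]
          · right
            have hmul := MvPolynomial.totalDegree_mul A (T δ Dp - Dp)
            have hc : ((A * (T δ Dp - Dp)).totalDegree : ℤ)
                ≤ (A.totalDegree : ℤ) + ((T δ Dp - Dp).totalDegree : ℤ) := by exact_mod_cast hmul
            rw [h2p]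
            push_cast at hAdeg hDd ⊢
            nlinarith [hc, hAdeg, hDd, hDpdeg,
              (by exact_mod_cast hDpdeg : (Dp.totalDegree:ℤ) ≤ 2 ^ s * Q.totalDegree)]
        have hv : Dp * (T δ A - A) = 0 ∨
            ((Dp * (T δ A - A)).totalDegree : ℤ) ≤ (Nm.totalDegree : ℤ)
              + ((2:ℤ) ^ (1+s) - 1) * Q.totalDegree - (1+s) := by
          rcases Tdiff_int δ A with h0 | hAd
          · left; rw [h0, mul_zero]
          · right
            have hmul := MvPolynomial.totalDegree_mul Dp (T δ A - A)
            have hc : ((Dp * (T δ A - A)).totalDegree : ℤ)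
                ≤ (Dp.totalDegree : ℤ) + ((T δ A - A).totalDegree : ℤ) := by exact_mod_cast hmul
            rw [h2p]
            have hDpz : (Dp.totalDegree:ℤ) ≤ 2 ^ s * Q.totalDegree := by exact_mod_cast hDpdeg
            nlinarith [hc, hAd, hAdeg, hDpz]
        exact sub_deg_int hu hv
      · -- cardinality
        rw [Multiset.card_add, Multiset.card_map, hcard]
        have : ((j :: l).map γ).sum = 1 + (l.map γ).sum := by simp [hγj]
        rw [this, pow_add, pow_one]
        ring
      · -- bound on shifts
        intro v hv i
        rcases Multiset.mem_add.mp hv with hv | hv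
        · exact le_trans (hB v hv i) (Nat.le_succ B)
        · obtain ⟨w, hw, rfl⟩ := Multiset.mem_map.mp hv
          have hδi : δ i ≤ 1 := by
            rw [hδ, Pi.single_apply]
            split <;> omega
          have := hB w hw i
          simp only [Pi.add_apply]
          omega
      · -- evaluation identity
        intro k
        rw [hDl, hγj, Function.iterate_one]
        have hkm : ∀ k' : Fin n → ℤ, (fun i => k' i - (δ i : ℤ)) = k' - Pi.single j 1 := by
          intro k'
          funext i
          rw [hδ, Pi.sub_apply, Pi.single_apply, Pi.single_apply]
          split <;> simp
        have hdd : discDiff j (Dl l γ (fun k' => eval (zc k') Nm / eval (zc k') Q)) k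
            = eval (zc k) A / eval (zc k) Dp
              - eval (zc (k - Pi.single j 1)) A / eval (zc (k - Pi.single j 1)) Dp := by
          rw [discDiff, hev k, hev (k - Pi.single j 1)]
        rw [hdd]
        have hD1 : eval (zc k) Dp ≠ 0 := msprod_ne_zero Q hQ0 ms k
        have hD2 : eval (zc (k - Pi.single j 1)) Dp ≠ 0 := msprod_ne_zero Q hQ0 ms _
        rw [div_sub_div _ _ hD1 hD2]
        have hTA : eval (zc k) (T δ A) = eval (zc (k - Pi.single j 1)) A := by
          rw [eval_T, hkm]
        have hTD : eval (zc k) (T δ Dp) = eval (zc (k - Pi.single j 1)) Dp := by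
          rw [eval_T, hkm]
        have hnum : eval (zc k) (A * T δ Dp - Dp * T δ A)
            = eval (zc k) A * eval (zc (k - Pi.single j 1)) Dp
              - eval (zc k) Dp * eval (zc (k - Pi.single j 1)) A := by
          rw [map_sub, map_mul, map_mul, hTA, hTD]
        have hden : eval (zc k) (((ms + ms.map (· + δ)).map (fun v => T v Q)).prod)
            = eval (zc k) Dp * eval (zc (k - Pi.single j 1)) Dp := by
          rw [Multiset.map_add, Multiset.prod_add, map_mul]
          congr 1
          rw [Multiset.map_map]
          have hcomp : ((fun v => T v Q) ∘ (· + δ)) = (T δ ∘ fun v => T v Q) := by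
            funext v
            simp only [Function.comp_apply]
            rw [T_T]
          rw [hcomp, ← Multiset.map_map, ← T_msprod, ← hDp, hTD]
        rw [hnum, hden]
end EllAux

namespace EllAux
variable {n : ℕ}
open Finset MvPolynomial

lemma multiset_prod_lower (s : Multiset ℝ) (r : ℝ) (hr : 0 ≤ r) (h : ∀ x ∈ s, r ≤ x) :
    r ^ Multiset.card s ≤ s.prod := by
  induction s using Multiset.induction_on with
  | empty => simp
  | cons x s ih =>
    rw [Multiset.card_cons, Multiset.prod_cons, pow_succ, mul_comm (r ^ Multiset.card s) r]
    have hx := h x (Multiset.mem_cons_self x s)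
    exact mul_le_mul hx (ih fun y hy => h y (Multiset.mem_cons_of_mem hy))
      (pow_nonneg hr _) (le_trans hr hx)

lemma norm_msprod (s : Multiset ℂ) : ‖s.prod‖ = (s.map (fun z => ‖z‖)).prod := by
  induction s using Multiset.induction_on with
  | empty => simp
  | cons x s ih => rw [Multiset.prod_cons, Multiset.map_cons, Multiset.prod_cons, norm_mul, ih]

def xE (k : Fin n → ℤ) : EuclideanSpace ℝ (Fin n) := WithLp.toLp 2 (fun i => (k i : ℝ))

lemma norm_xE (k : Fin n → ℤ) : ‖xE k‖ = Real.sqrt (∑ i, ((k i : ℝ)) ^ 2) := by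
  rw [EuclideanSpace.norm_eq]
  congr 1
  refine Finset.sum_congr rfl fun i _ => ?_
  rw [Real.norm_eq_abs, sq_abs]
  rfl

lemma norm_zc_le (k : Fin n → ℤ) (i : Fin n) : ‖zc k i‖ ≤ ‖xE k‖ := by
  have h1 : zc k i = ((k i : ℝ) : ℂ) := by simp [zc]
  rw [h1, Complex.norm_real, Real.norm_eq_abs]
  exact abs_coord_le_norm (xE k) i

lemma norm_xE_shift (k : Fin n → ℤ) (v : Fin n → ℕ) (B : ℕ) (hv : ∀ i, v i ≤ B) :
    ‖xE k‖ - B * Real.sqrt n ≤ ‖xE (fun i => k i - (v i : ℤ))‖ := by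
  set yv : EuclideanSpace ℝ (Fin n) := WithLp.toLp 2 (fun i => ((v i : ℝ))) with hyv
  have hsub : xE (fun i => k i - (v i : ℤ)) = xE k - yv := by
    ext i
    simp only [xE, hyv, PiLp.sub_apply, PiLp.toLp_apply]
    push_cast
    ring
  have hvnorm : ‖yv‖ ≤ B * Real.sqrt n := by
    rw [hyv, EuclideanSpace.norm_eq]
    have hsum : (∑ i, ‖((v i : ℝ))‖ ^ 2) ≤ ∑ _i : Fin n, (B:ℝ) ^ 2 := by
      refine Finset.sum_le_sum fun i _ => ?_
      rw [Real.norm_eq_abs, sq_abs]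
      have : (v i : ℝ) ≤ (B : ℝ) := by exact_mod_cast hv i
      have h0 : (0:ℝ) ≤ (v i : ℝ) := by positivity
      nlinarith
    refine (Real.sqrt_le_sqrt hsum).trans ?_
    rw [Finset.sum_const, Finset.card_univ, Fintype.card_fin, nsmul_eq_mul]
    rw [show (n : ℝ) * (B:ℝ)^2 = ((B:ℝ) * Real.sqrt n)^2 by
      rw [mul_pow, Real.sq_sqrt (by positivity : (0:ℝ) ≤ (n:ℝ))]; ring]
    rw [Real.sqrt_sq (by positivity)]
  have htri := norm_sub_norm_le (xE k) yv
  rw [← hsub] at htri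
  linarith

end EllAux


namespace EllAux
variable {n : ℕ}
open Finset MvPolynomial

lemma xE_zc (m : Fin n → ℤ) : (fun i => ((xE m i : ℝ) : ℂ)) = zc m := by
  funext i
  simp [xE, zc]

lemma discDiffMulti_eq_Dl (γ : Fin n → ℕ) :
    (discDiffMulti γ : ((Fin n → ℤ) → ℂ) → _) = Dl (List.finRange n) γ := rfl

lemma final_piece (hn : 0 < n) (P Q Nm : MvPolynomial (Fin n) ℂ)
    (hP : IsElliptic P) (hQ : IsElliptic Q)
    (hQ0 : ∀ k : Fin n → ℤ, eval (zc k) Q ≠ 0)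
    (hNdeg : Nm.totalDegree ≤ P.totalDegree)
    (γ : Fin n → ℕ) (hγ : ∀ i, γ i ≤ 1) :
    ∃ C : ℝ, 0 < C ∧ ∃ T₀ : ℝ, 1 ≤ T₀ ∧ ∀ k : Fin n → ℤ, T₀ ≤ ‖xE k‖ →
      ‖xE k‖ ^ (∑ i, γ i) *
        ‖discDiffMulti γ (fun k' => eval (zc k') Nm / eval (zc k') Q) k‖
        ≤ C * ‖eval (zc k) P / eval (zc k) Q‖ := by
  classical
  obtain ⟨A, ms, B, hdeg, hcard, hB, hev⟩ := key_diff Q Nm hQ0 (List.finRange n) γ hγ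
  have hgs : ((List.finRange n).map γ).sum = ∑ i, γ i := (Fin.sum_univ_def γ).symm
  set g := ∑ i, γ i with hg
  rw [hgs] at hdeg hcard
  obtain ⟨CA, hCA, hCAle⟩ := eval_norm_upper A
  obtain ⟨CQ, hCQ, hCQle⟩ := eval_norm_upper Q
  obtain ⟨cP, hcP, RP, hRP1, hPlow⟩ := elliptic_lower hn P hP
  obtain ⟨cQ, hcQ, RQ, hRQ1, hQlow⟩ := elliptic_lower hn Q hQ
  set e := Q.totalDegree with he
  set dP := P.totalDegree with hdP
  set W : ℕ := 2 ^ g with hW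
  set cD := (cQ * (1/2) ^ e) ^ W with hcD
  have hcDpos : 0 < cD := by rw [hcD]; positivity
  refine ⟨CA * CQ / (cP * cD), by positivity,
    max (max RP 1) (max (RQ + B * Real.sqrt n) (2 * (B * Real.sqrt n))), ?_, ?_⟩
  · exact le_max_of_le_left (le_max_right _ _)
  intro k ht
  set t := ‖xE k‖ with htdef
  have ht1 : 1 ≤ t := le_trans (le_max_of_le_left (le_max_right _ _)) ht
  have htRP : RP ≤ t := le_trans (le_max_of_le_left (le_max_left _ _)) ht
  have htRQ : RQ + B * Real.sqrt n ≤ t := le_trans (le_max_of_le_right (le_max_left _ _)) ht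
  have ht2B : 2 * (B * Real.sqrt n) ≤ t := le_trans (le_max_of_le_right (le_max_right _ _)) ht
  have ht0 : 0 < t := lt_of_lt_of_le zero_lt_one ht1
  -- per-factor lower bound
  have hfac : ∀ v ∈ ms, cQ * (1/2) ^ e * t ^ e ≤ ‖eval (zc (fun i => k i - (v i : ℤ))) Q‖ := by
    intro v hv
    set r := ‖xE (fun i => k i - (v i : ℤ))‖ with hr
    have hshift := norm_xE_shift k v B (hB v hv)
    have hrRQ : RQ ≤ r := by
      have hBn : (0:ℝ) ≤ B * Real.sqrt n := by positivity
      rw [← hr] at hshift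
      linarith
    have hrt2 : t / 2 ≤ r := by
      rw [← hr] at hshift
      linarith
    have hQl := hQlow (xE (fun i => k i - (v i : ℤ))) hrRQ
    rw [xE_zc] at hQl
    have hmon : cQ * (t/2) ^ e ≤ cQ * r ^ e := by
      refine mul_le_mul_of_nonneg_left (pow_le_pow_left₀ (by linarith) hrt2 e) (le_of_lt hcQ)
    have heq : cQ * (1/2) ^ e * t ^ e = cQ * (t/2) ^ e := by
      rw [mul_assoc, show ((1:ℝ)/2) ^ e * t ^ e = ((1/2) * t)^e from (mul_pow _ _ _).symm,
        show ((1:ℝ)/2) * t = t/2 by ring]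
    rw [heq]
    exact le_trans hmon hQl
  -- denominator lower bound
  have hD : cD * t ^ (W * e) ≤ ‖eval (zc k) ((ms.map (fun v => T v Q)).prod)‖ := by
    rw [eval_msprod, norm_msprod, Multiset.map_map]
    have hlow := multiset_prod_lower (ms.map (fun v => ‖eval (zc (fun i => k i - (v i : ℤ))) Q‖))
      (cQ * (1/2) ^ e * t ^ e) (by positivity) (by
        intro x hx
        obtain ⟨v, hv, rfl⟩ := Multiset.mem_map.mp hx
        exact hfac v hv)
    rw [Multiset.card_map, hcard] at hlow
    have hre : (cQ * (1/2) ^ e * t ^ e) ^ W = cD * t ^ (W * e) := by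
      rw [mul_pow, hcD, mul_comm W e, pow_mul]
    rw [hre] at hlow
    exact hlow
  have hDpos : 0 < ‖eval (zc k) ((ms.map (fun v => T v Q)).prod)‖ :=
    norm_pos_iff.mpr (msprod_ne_zero Q hQ0 ms k)
  have hQpos : 0 < ‖eval (zc k) Q‖ := norm_pos_iff.mpr (hQ0 k)
  have hAup : ‖eval (zc k) A‖ ≤ CA * t ^ A.totalDegree := hCAle (zc k) t ht1 (norm_zc_le k)
  have hQup : ‖eval (zc k) Q‖ ≤ CQ * t ^ e := hCQle (zc k) t ht1 (norm_zc_le k)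
  have hPl : cP * t ^ dP ≤ ‖eval (zc k) P‖ := by
    have := hPlow (xE k) htRP
    rw [xE_zc] at this
    exact this
  -- rewrite the difference
  rw [discDiffMulti_eq_Dl, hev k]
  rcases hdeg with hA0 | hdegA
  · rw [hA0]
    simp only [map_zero, zero_div, norm_zero, mul_zero]
    positivity
  -- exponent inequality
  have hexp : A.totalDegree + g + e ≤ dP + W * e := by
    have hWz : ((W:ℕ):ℤ) = (2:ℤ) ^ g := by rw [hW]; push_cast; ring
    have hNz : (Nm.totalDegree : ℤ) ≤ (dP : ℤ) := by exact_mod_cast hNdeg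
    have hgoal : (A.totalDegree : ℤ) + g + e ≤ (dP : ℤ) + (W : ℤ) * e := by
      rw [hWz]
      linarith [hdegA]
    exact_mod_cast hgoal
  rw [norm_div, norm_div, ← mul_div_assoc, ← mul_div_assoc, div_le_div_iff₀ hDpos hQpos]
  calc t ^ g * ‖eval (zc k) A‖ * ‖eval (zc k) Q‖
      ≤ t ^ g * (CA * t ^ A.totalDegree) * (CQ * t ^ e) := by
        refine mul_le_mul (mul_le_mul_of_nonneg_left hAup (by positivity)) hQup
          (norm_nonneg _) (by positivity)
    _ = (CA * CQ) * t ^ (g + A.totalDegree + e) := by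
        rw [pow_add, pow_add]; ring
    _ ≤ (CA * CQ) * t ^ (dP + W * e) := by
        refine mul_le_mul_of_nonneg_left (pow_le_pow_right₀ ht1 (by omega)) (by positivity)
    _ = (CA * CQ / (cP * cD)) * (cP * t ^ dP) * (cD * t ^ (W * e)) := by
        rw [pow_add]
        field_simp
    _ ≤ (CA * CQ / (cP * cD)) * ‖eval (zc k) P‖ *
          ‖eval (zc k) ((ms.map (fun v => T v Q)).prod)‖ := by
        refine mul_le_mul (mul_le_mul_of_nonneg_left hPl (by positivity)) hD
          (by positivity) (by positivity)

end EllAux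


open MvPolynomial EllAux in
/-- Strict 1-regularity of quotients of elliptic polynomials. -/
theorem strict_oneRegular_of_elliptic {n : ℕ} (P Q N : MvPolynomial (Fin n) ℂ)
    (hP : IsElliptic P) (hQ : IsElliptic Q) (hN : N.totalDegree ≤ P.totalDegree)
    (hQ0 : ∀ k : Fin n → ℤ, MvPolynomial.eval (fun i => (k i : ℂ)) Q ≠ 0)
    (a b : (Fin n → ℤ) → ℂ)
    (hadef : ∀ k, a k = MvPolynomial.eval (fun i => (k i : ℂ)) N /
      MvPolynomial.eval (fun i => (k i : ℂ)) Q)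
    (hbdef : ∀ k, b k = MvPolynomial.eval (fun i => (k i : ℂ)) P /
      MvPolynomial.eval (fun i => (k i : ℂ)) Q) :
    ∀ γ : Fin n → ℕ, (∀ i, γ i ≤ 1) →
      ∃ K : Finset (Fin n → ℤ), ∃ C : ℝ, 0 < C ∧
        ∀ k : Fin n → ℤ, k ∉ K →
          Real.sqrt (∑ i, ((k i : ℝ)) ^ 2) ^ (∑ i, γ i) *
            max ‖discDiffMulti γ a k‖ ‖discDiffMulti γ b k‖ ≤ C * ‖b k‖ := by
  intro γ hγ
  rcases Nat.eq_zero_or_pos n with hn0 | hn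
  · subst hn0
    exact ⟨Finset.univ, 1, one_pos, fun k hk => absurd (Finset.mem_univ k) hk⟩
  · have hQ0' : ∀ k : Fin n → ℤ, eval (zc k) Q ≠ 0 := hQ0
    obtain ⟨C₁, hC₁, T₁, hT₁, h₁⟩ := final_piece hn P Q N hP hQ hQ0' hN γ hγ
    obtain ⟨C₂, hC₂, T₂, hT₂, h₂⟩ := final_piece hn P Q P hP hQ hQ0' (le_refl _) γ hγ
    have ha : a = fun k' => eval (zc k') N / eval (zc k') Q := funext hadef
    have hb : b = fun k' => eval (zc k') P / eval (zc k') Q := funext hbdef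
    set T₀ : ℝ := max T₁ T₂ with hT₀
    set M₀ : ℤ := ⌈T₀⌉ with hM₀
    refine ⟨Finset.Icc (fun _ => -M₀) (fun _ => M₀), max C₁ C₂,
      lt_of_lt_of_le hC₁ (le_max_left _ _), fun k hk => ?_⟩
    have hkT : T₀ ≤ ‖xE k‖ := by
      have hex : ∃ i, k i < -M₀ ∨ M₀ < k i := by
        by_contra hcon
        push_neg at hcon
        refine hk (Finset.mem_Icc.mpr ⟨fun i => ?_, fun i => ?_⟩)
        · exact (hcon i).1
        · exact (hcon i).2
      obtain ⟨i, hi⟩ := hex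
      have habsZ : M₀ ≤ |k i| := by
        rcases hi with hi | hi
        · have h1 : M₀ ≤ -(k i) := by omega
          have h2 : -(k i) ≤ |k i| := neg_le_abs _
          omega
        · have h2 : k i ≤ |k i| := le_abs_self _
          omega
      have habsR : (M₀ : ℝ) ≤ |((k i : ℤ) : ℝ)| := by
        rw [← Int.cast_abs]
        exact_mod_cast habsZ
      have hcoord : |((k i : ℤ) : ℝ)| ≤ ‖xE k‖ := abs_coord_le_norm (xE k) i
      have hceil : T₀ ≤ (M₀ : ℝ) := Int.le_ceil T₀
      linarith
    rw [← norm_xE k, ha, hb,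
      mul_max_of_nonneg _ _ (pow_nonneg (norm_nonneg (xE k)) (∑ i, γ i))]
    refine max_le ?_ ?_
    · refine le_trans (h₁ k (le_trans (le_max_left _ _) hkT)) ?_
      exact mul_le_mul_of_nonneg_right (le_max_left _ _) (norm_nonneg _)
    · refine le_trans (h₂ k (le_trans (le_max_right _ _) hkT)) ?_
      exact mul_le_mul_of_nonneg_right (le_max_right _ _) (norm_nonneg _)
end

section
/- Parameter-elliptic lower bound: Let P be a polynomial in n variables with complex coefficients of degree m ≥ 1 which is parameter-elliptic in Σ̄_{π−φ} for some φ ∈ (0,π). Then there exist constants C > 0 and R > 0 such that |λ| + |ξ|^m ≤ C · |λ + P(ξ)| for all λ ∈ Σ̄_{π−φ} and all ξ ∈ ℝⁿ with |ξ| ≥ R. -/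
open scoped BigOperators

/-- The closed sector `Σ̄_φ = {λ ∈ ℂ : |arg λ| ≤ φ} ∪ {0}`. -/
def closedSector (φ : ℝ) : Set ℂ := {z : ℂ | |z.arg| ≤ φ} ∪ {0}

/-- `P` is parameter-elliptic in `Σ̄_{π−φ}`: `λ + P^#(ξ) ≠ 0` for all
`(λ, ξ) ∈ Σ̄_{π−φ} × ℝⁿ` with `(λ, ξ) ≠ (0, 0)`, where `P^#` is the principal part. -/
def IsParamElliptic {n : ℕ} (P : MvPolynomial (Fin n) ℂ) (φ : ℝ) : Prop :=
  ∀ z ∈ closedSector (Real.pi - φ), ∀ ξ : EuclideanSpace ℝ (Fin n),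
    ¬(z = 0 ∧ ξ = 0) →
      z + MvPolynomial.eval (fun i => (ξ i : ℂ))
          (MvPolynomial.homogeneousComponent P.totalDegree P) ≠ 0

open MvPolynomial

lemma aux_coord_le_norm {n : ℕ} (ξ : EuclideanSpace ℝ (Fin n)) (i : Fin n) :
    |ξ i| ≤ ‖ξ‖ := by
  rw [EuclideanSpace.norm_eq, ← Real.sqrt_sq_eq_abs]
  apply Real.sqrt_le_sqrt
  simpa using Finset.single_le_sum (f := fun j => ξ j ^ 2)
    (fun j _ => sq_nonneg _) (Finset.mem_univ i)

lemma aux_eval_homog {n m : ℕ} {φ : MvPolynomial (Fin n) ℂ} (h : φ.IsHomogeneous m)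
    (c : ℂ) (x : Fin n → ℂ) :
    eval (fun i => c * x i) φ = c ^ m * eval x φ := by
  rw [eval_eq', eval_eq', Finset.mul_sum]
  refine Finset.sum_congr rfl fun d hd => ?_
  have hdm : ∑ i, d i = m := by
    have h1 : d.degree = m := by
      rw [Finsupp.degree_eq_weight_one]
      exact h (mem_support_iff.mp hd)
    rw [← h1, Finsupp.degree]
    exact (Finset.sum_subset (Finset.subset_univ _)
      (fun i _ hi => Finsupp.notMem_support_iff.mp hi)).symm
  calc φ.coeff d * ∏ i, (c * x i) ^ d i
      = φ.coeff d * ((∏ i, c ^ d i) * ∏ i, x i ^ d i) := by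
        rw [← Finset.prod_mul_distrib]; simp [mul_pow]
    _ = c ^ m * (φ.coeff d * ∏ i, x i ^ d i) := by
        rw [Finset.prod_pow_eq_pow_sum, hdm]; ring

lemma aux_norm_eval_le {n D : ℕ} (φ : MvPolynomial (Fin n) ℂ)
    (hD : ∀ d ∈ φ.support, d.degree ≤ D) (x : Fin n → ℂ) {M : ℝ} (hM : 1 ≤ M)
    (hx : ∀ i, ‖x i‖ ≤ M) :
    ‖eval x φ‖ ≤ (∑ d ∈ φ.support, ‖φ.coeff d‖) * M ^ D := by
  rw [eval_eq, Finset.sum_mul]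
  refine (norm_sum_le _ _).trans (Finset.sum_le_sum fun d hd => ?_)
  rw [norm_mul]
  refine mul_le_mul_of_nonneg_left ?_ (norm_nonneg _)
  calc ‖∏ i ∈ d.support, x i ^ d i‖
      ≤ ∏ i ∈ d.support, M ^ d i := by
        rw [norm_prod]
        refine Finset.prod_le_prod (fun _ _ => norm_nonneg _) fun i _ => ?_
        rw [norm_pow]
        exact pow_le_pow_left₀ (norm_nonneg _) (hx i) _
    _ = M ^ d.degree := by rw [Finset.prod_pow_eq_pow_sum]; rfl
    _ ≤ M ^ D := pow_le_pow_right₀ hM (hD d hd)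

lemma aux_closedSector_eq {ψ : ℝ} (h0 : 0 ≤ ψ) (hπ : ψ ≤ Real.pi) :
    closedSector ψ = {z : ℂ | ‖z‖ * Real.cos ψ ≤ z.re} := by
  ext z
  rcases eq_or_ne z 0 with rfl | hz
  · simp [closedSector]
  · simp only [closedSector, Set.mem_union, Set.mem_setOf_eq, Set.mem_singleton_iff, hz,
      or_false]
    have habs : ‖z‖ = ‖z‖ := rfl
    have hre : z.re = ‖z‖ * Real.cos z.arg := by
      rw [← Complex.norm_mul_cos_arg z]
    have hpos : (0:ℝ) < ‖z‖ := norm_pos_iff.mpr hz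
    rw [hre]
    rw [mul_le_mul_iff_right₀ hpos]
    have harg : |z.arg| ≤ Real.pi := Complex.abs_arg_le_pi z
    have hcos : Real.cos z.arg = Real.cos |z.arg| := by
      rcases abs_choice z.arg with h | h
      · rw [h]
      · rw [h, Real.cos_neg]
    rw [hcos]
    constructor
    · intro hle
      exact Real.cos_le_cos_of_nonneg_of_le_pi (abs_nonneg _) hπ hle
    · intro hle
      by_contra hlt
      push_neg at hlt
      have := Real.cos_lt_cos_of_nonneg_of_le_pi h0 harg hlt
      linarith

lemma aux_isClosed_closedSector {ψ : ℝ} (h0 : 0 ≤ ψ) (hπ : ψ ≤ Real.pi) :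
    IsClosed (closedSector ψ) := by
  rw [aux_closedSector_eq h0 hπ]
  exact isClosed_le (by fun_prop) Complex.continuous_re

lemma aux_smul_mem_closedSector {ψ : ℝ} {z : ℂ} (hz : z ∈ closedSector ψ) {r : ℝ}
    (hr : 0 < r) : (r : ℂ) * z ∈ closedSector ψ := by
  rcases hz with hz | hz
  · left
    simpa [Complex.arg_real_mul z hr] using hz
  · right; simp at hz; simp [hz]

/-- Lower bound for the principal part via compactness + homogeneity. -/
lemma aux_homog_lower {n : ℕ} (P : MvPolynomial (Fin n) ℂ)
    (hdeg : 1 ≤ P.totalDegree) {ψ : ℝ} (h0 : 0 ≤ ψ) (hπ : ψ ≤ Real.pi)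
    (hP : ∀ z ∈ closedSector ψ, ∀ ξ : EuclideanSpace ℝ (Fin n),
      ¬(z = 0 ∧ ξ = 0) →
        z + eval (fun i => (ξ i : ℂ)) (homogeneousComponent P.totalDegree P) ≠ 0) :
    ∃ c : ℝ, 0 < c ∧ ∀ z ∈ closedSector ψ, ∀ ξ : EuclideanSpace ℝ (Fin n),
      c * (‖z‖ + ‖ξ‖ ^ P.totalDegree) ≤
        ‖z + eval (fun i => (ξ i : ℂ)) (homogeneousComponent P.totalDegree P)‖ := by
  set m := P.totalDegree with hm
  set Pp := homogeneousComponent m P with hPp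
  set f : ℂ × EuclideanSpace ℝ (Fin n) → ℝ :=
    fun p => ‖p.1 + eval (fun i => (p.2 i : ℂ)) Pp‖ with hf
  have hfc : Continuous f := by
    apply continuous_norm.comp
    apply continuous_fst.add
    exact (MvPolynomial.continuous_eval Pp).comp
      (continuous_pi fun i => Complex.continuous_ofReal.comp
        ((EuclideanSpace.proj i).continuous.comp continuous_snd))
  set K : Set (ℂ × EuclideanSpace ℝ (Fin n)) :=
    {p | p.1 ∈ closedSector ψ ∧ ‖p.1‖ + ‖p.2‖ ^ m = 1} with hK
  have hKc : IsCompact K := by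
    apply IsCompact.of_isClosed_subset
      ((isCompact_closedBall (0:ℂ) 1).prod (isCompact_closedBall (0:EuclideanSpace ℝ (Fin n)) 1))
    · exact ((aux_isClosed_closedSector h0 hπ).preimage continuous_fst).inter
        (isClosed_eq (by fun_prop) continuous_const)
    · rintro ⟨z, ξ⟩ ⟨-, hs⟩
      have h1 : ‖z‖ ≤ 1 := by nlinarith [pow_nonneg (norm_nonneg ξ) m]
      have h2 : ‖ξ‖ ≤ 1 := by
        have h2' : ‖ξ‖ ^ m ≤ 1 := by nlinarith [norm_nonneg z]
        exact (pow_le_one_iff_of_nonneg (norm_nonneg ξ) (by omega)).mp h2'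
      exact Set.mem_prod.mpr ⟨by simpa using h1, by simpa using h2⟩
  have hKne : K.Nonempty := by
    refine ⟨(1, 0), ?_, ?_⟩
    · left; simp [Complex.arg_one]; exact h0
    · simp [zero_pow (show m ≠ 0 by omega)]
  obtain ⟨p0, hp0K, hp0min⟩ := hKc.exists_isMinOn hKne hfc.continuousOn
  set c := f p0 with hc
  have hcpos : 0 < c := by
    rcases lt_or_eq_of_le (norm_nonneg _ : (0:ℝ) ≤ f p0) with h | h
    · exact h
    · exfalso
      apply hP p0.1 hp0K.1 p0.2
      · rintro ⟨hz0, hξ0⟩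
        have := hp0K.2
        rw [hz0, hξ0] at this
        simp [zero_pow (show m ≠ 0 by omega)] at this
      · have : ‖p0.1 + eval (fun i => ((p0.2 i : ℝ) : ℂ)) Pp‖ = 0 := h.symm
        exact norm_eq_zero.mp this
  refine ⟨c, hcpos, fun z hz ξ => ?_⟩
  set s := ‖z‖ + ‖ξ‖ ^ m with hs
  rcases eq_or_lt_of_le (show (0:ℝ) ≤ s by positivity) with hs0 | hspos
  · rw [← hs0, mul_zero]; exact norm_nonneg _
  · set t := s ^ ((m:ℝ)⁻¹) with ht
    have htpos : 0 < t := Real.rpow_pos_of_pos hspos _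
    have htm : t ^ m = s := by
      rw [ht, ← Real.rpow_natCast (s ^ _) m, ← Real.rpow_mul hspos.le,
        inv_mul_cancel₀ (by exact_mod_cast (by omega : m ≠ 0)), Real.rpow_one]
    have htmpos : 0 < t ^ m := pow_pos htpos m
    set z' := (((t ^ m)⁻¹ : ℝ) : ℂ) * z with hz'
    set ξ' := t⁻¹ • ξ with hξ'
    have hz's : z' ∈ closedSector ψ := aux_smul_mem_closedSector hz (by positivity)
    have hnz' : ‖z'‖ = (t ^ m)⁻¹ * ‖z‖ := by
      rw [hz', norm_mul, Complex.norm_real, Real.norm_eq_abs, abs_of_pos (by positivity)]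
    have hnξ' : ‖ξ'‖ ^ m = (t ^ m)⁻¹ * ‖ξ‖ ^ m := by
      rw [hξ', norm_smul, Real.norm_eq_abs, abs_of_pos (by positivity), mul_pow, inv_pow]
    have hmem : (z', ξ') ∈ K := by
      refine ⟨hz's, ?_⟩
      show ‖z'‖ + ‖ξ'‖ ^ m = 1
      rw [hnz', hnξ', ← mul_add, ← hs, ← htm, inv_mul_cancel₀ htmpos.ne']
    have heval : eval (fun i => ((ξ' i : ℝ) : ℂ)) Pp
        = (((t:ℂ)) ^ m)⁻¹ * eval (fun i => ((ξ i : ℝ) : ℂ)) Pp := by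
      have hfun : (fun i => ((ξ' i : ℝ) : ℂ)) = fun i => ((t:ℂ))⁻¹ * ((ξ i : ℝ) : ℂ) := by
        funext i
        rw [hξ']
        show (((t⁻¹ • ξ) i : ℝ) : ℂ) = _
        rw [PiLp.smul_apply, smul_eq_mul]
        push_cast
        ring
      rw [hfun, aux_eval_homog (homogeneousComponent_isHomogeneous m P) _ _, inv_pow]
    have hkey : c ≤ f (z', ξ') := hp0min hmem
    have hfval : f (z', ξ') = (t ^ m)⁻¹ * ‖z + eval (fun i => ((ξ i : ℝ) : ℂ)) Pp‖ := by
      show ‖z' + eval (fun i => ((ξ' i : ℝ) : ℂ)) Pp‖ = _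
      rw [heval, hz']
      have : (((t ^ m)⁻¹ : ℝ) : ℂ) * z + ((t:ℂ) ^ m)⁻¹ * eval (fun i => ((ξ i : ℝ) : ℂ)) Pp
          = ((t:ℂ) ^ m)⁻¹ * (z + eval (fun i => ((ξ i : ℝ) : ℂ)) Pp) := by
        push_cast
        ring
      rw [this, norm_mul, norm_inv, norm_pow, Complex.norm_real, Real.norm_eq_abs,
        abs_of_pos htpos]
    rw [hfval] at hkey
    calc c * s = (c * s) * ((t ^ m)⁻¹ * t ^ m) := by
          rw [inv_mul_cancel₀ htmpos.ne', mul_one]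
      _ = ((t ^ m)⁻¹ * (c * s)) * t ^ m := by ring
      _ = c * t ^ m := by rw [htm]; field_simp
      _ ≤ ((t ^ m)⁻¹ * ‖z + eval (fun i => ((ξ i : ℝ) : ℂ)) Pp‖) * t ^ m := by
          exact mul_le_mul_of_nonneg_right hkey htmpos.le
      _ = ‖z + eval (fun i => ((ξ i : ℝ) : ℂ)) Pp‖ := by
          field_simp

/-- Parameter-elliptic lower bound: `|λ| + |ξ|^m ≤ C |λ + P(ξ)|` for `|ξ| ≥ R`. -/
theorem paramElliptic_lower_bound {n : ℕ} (P : MvPolynomial (Fin n) ℂ)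
    (hdeg : 1 ≤ P.totalDegree) (φ : ℝ) (hφ : φ ∈ Set.Ioo 0 Real.pi)
    (hP : IsParamElliptic P φ) :
    ∃ C : ℝ, 0 < C ∧ ∃ R : ℝ, 0 < R ∧
      ∀ z ∈ closedSector (Real.pi - φ), ∀ ξ : EuclideanSpace ℝ (Fin n), R ≤ ‖ξ‖ →
        ‖z‖ + ‖ξ‖ ^ P.totalDegree ≤
          C * ‖z + MvPolynomial.eval (fun i => (ξ i : ℂ)) P‖ := by
  obtain ⟨hφ0, hφπ⟩ := hφ
  set m := P.totalDegree with hm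
  set Pp := homogeneousComponent m P with hPp
  set Q := P - Pp with hQ
  have h0 : 0 ≤ Real.pi - φ := by linarith
  have hπ : Real.pi - φ ≤ Real.pi := by linarith
  obtain ⟨c, hcpos, hlow⟩ := aux_homog_lower P hdeg h0 hπ hP
  -- degree bound for the lower-order part
  have hQd : ∀ d ∈ Q.support, d.degree ≤ m - 1 := by
    intro d hd
    have hcoef : Q.coeff d ≠ 0 := mem_support_iff.mp hd
    have hQco : Q.coeff d = P.coeff d - (if d.degree = m then P.coeff d else 0) := by
      rw [hQ, coeff_sub, hPp, coeff_homogeneousComponent]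
    by_cases hdm : d.degree = m
    · rw [hQco, if_pos hdm, sub_self] at hcoef
      exact absurd rfl hcoef
    · have hPco : P.coeff d ≠ 0 := by
        rw [hQco, if_neg hdm, sub_zero] at hcoef
        exact hcoef
      have hle : d.degree ≤ m := le_totalDegree (mem_support_iff.mpr hPco)
      omega
  set CQ := ∑ d ∈ Q.support, ‖Q.coeff d‖ with hCQ
  have hCQ0 : 0 ≤ CQ := Finset.sum_nonneg fun _ _ => norm_nonneg _
  set R := max 1 (2 * CQ / c) with hR
  refine ⟨2 / c, by positivity, R, lt_of_lt_of_le one_pos (le_max_left _ _), ?_⟩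
  intro z hz ξ hξ
  have hM : 1 ≤ ‖ξ‖ := le_trans (le_max_left _ _) hξ
  have hξ2 : 2 * CQ / c ≤ ‖ξ‖ := le_trans (le_max_right _ _) hξ
  -- bound the lower order part
  have hQb : ‖eval (fun i => ((ξ i : ℝ) : ℂ)) Q‖ ≤ CQ * ‖ξ‖ ^ (m - 1) :=
    aux_norm_eval_le Q hQd _ hM fun i => by
      rw [Complex.norm_real, Real.norm_eq_abs]; exact aux_coord_le_norm ξ i
  have hQc : CQ * ‖ξ‖ ^ (m - 1) ≤ c / 2 * ‖ξ‖ ^ m := by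
    have h1 : CQ ≤ c / 2 * ‖ξ‖ := by
      rw [div_le_iff₀ hcpos] at hξ2
      nlinarith
    have h2 : ‖ξ‖ ^ m = ‖ξ‖ * ‖ξ‖ ^ (m - 1) := by
      conv_lhs => rw [show m = (m - 1) + 1 by omega]
      rw [pow_succ]
      ring
    calc CQ * ‖ξ‖ ^ (m - 1) ≤ (c / 2 * ‖ξ‖) * ‖ξ‖ ^ (m - 1) :=
            mul_le_mul_of_nonneg_right h1 (pow_nonneg (norm_nonneg _) _)
      _ = c / 2 * ‖ξ‖ ^ m := by rw [h2]; ring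
  have hkey : c * (‖z‖ + ‖ξ‖ ^ m) ≤ ‖z + eval (fun i => ((ξ i : ℝ) : ℂ)) Pp‖ := hlow z hz ξ
  have hsplit : ‖z + eval (fun i => ((ξ i : ℝ) : ℂ)) Pp‖
      ≤ ‖z + eval (fun i => ((ξ i : ℝ) : ℂ)) P‖ + ‖eval (fun i => ((ξ i : ℝ) : ℂ)) Q‖ := by
    have heq : z + eval (fun i => ((ξ i : ℝ) : ℂ)) Pp
        = (z + eval (fun i => ((ξ i : ℝ) : ℂ)) P) - eval (fun i => ((ξ i : ℝ) : ℂ)) Q := by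
      rw [hQ, map_sub]
      ring
    rw [heq]
    exact norm_sub_le _ _
  have hfinal : c / 2 * (‖z‖ + ‖ξ‖ ^ m) ≤ ‖z + eval (fun i => ((ξ i : ℝ) : ℂ)) P‖ := by
    have hnn : 0 ≤ ‖z‖ := norm_nonneg z
    nlinarith [pow_nonneg (norm_nonneg ξ) m]
  rw [div_mul_eq_mul_div, le_div_iff₀ hcpos]
  nlinarith [hfinal]
end

section
/- Sector mapping property for homogeneous parameter-elliptic polynomials: Let P be a homogeneous polynomial of degree m ≥ 1 in n variables with complex coefficients, and let φ_P, φ_V ∈ [0,π) with φ_P + φ_V < π. Assume that for every φ ∈ (φ_P, π) one has λ + P(ξ) ≠ 0 for all λ ∈ Σ̄_{π−φ} and all ξ ∈ ℝⁿ with (λ, ξ) ≠ (0, 0). Then for every φ₀ with max{φ_P, φ_V} < φ₀ < π there exists φ > φ_V such that λ + P(ξ) ∈ Σ_{π−φ} for all ξ ∈ ℝⁿ and all λ ∈ Σ_{π−φ₀}. -/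
open scoped BigOperators

/-- The open sector `Σ_φ = {λ ∈ ℂ \ {0} : |arg λ| < φ}`. -/
def openSector (φ : ℝ) : Set ℂ := {z : ℂ | z ≠ 0 ∧ |z.arg| < φ}


private lemma trig_between (ra rb rc αa αb αc : ℝ)
    (hra : 0 < ra) (hrb : 0 < rb) (hrc : 0 < rc)
    (hαa : -Real.pi < αa) (hαa' : αa ≤ Real.pi)
    (hαb : -Real.pi < αb) (hαb' : αb ≤ Real.pi)
    (hαc : -Real.pi < αc) (hαc' : αc ≤ Real.pi)
    (hba : αb ≤ αa) (hd : αa - αb < Real.pi)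
    (hre : rc * Real.cos αc = ra * Real.cos αa + rb * Real.cos αb)
    (him : rc * Real.sin αc = ra * Real.sin αa + rb * Real.sin αb) :
    αb ≤ αc ∧ αc ≤ αa := by
  have pi_pos := Real.pi_pos
  have keysin : ∀ θ : ℝ, rc * Real.sin (αc - θ)
      = ra * Real.sin (αa - θ) + rb * Real.sin (αb - θ) := by
    intro θ
    simp only [Real.sin_sub]
    linear_combination him * Real.cos θ - hre * Real.sin θ
  have keycos : ∀ θ : ℝ, rc * Real.cos (αc - θ)
      = ra * Real.cos (αa - θ) + rb * Real.cos (αb - θ) := by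
    intro θ
    simp only [Real.cos_sub]
    linear_combination hre * Real.cos θ + him * Real.sin θ
  have s1 : Real.sin (αc - αa) ≤ 0 := by
    have h1 := keysin αa
    have h2 : Real.sin (αb - αa) ≤ 0 := by
      have h3 : 0 ≤ Real.sin (αa - αb) :=
        Real.sin_nonneg_of_nonneg_of_le_pi (by linarith) hd.le
      have h4 : Real.sin (αb - αa) = -Real.sin (αa - αb) := by
        rw [← Real.sin_neg]; ring_nf
      linarith
    have h5 : Real.sin (αa - αa) = 0 := by simp
    nlinarith
  have s2 : 0 ≤ Real.sin (αc - αb) := by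
    have h1 := keysin αb
    have h3 : 0 ≤ Real.sin (αa - αb) :=
      Real.sin_nonneg_of_nonneg_of_le_pi (by linarith) hd.le
    have h5 : Real.sin (αb - αb) = 0 := by simp
    nlinarith
  constructor
  · by_contra hlt
    push_neg at hlt
    -- αc < αb
    have hd2 : αc - αb ≤ -Real.pi := by
      by_contra h
      push_neg at h
      have : Real.sin (αb - αc) > 0 :=
        Real.sin_pos_of_pos_of_lt_pi (by linarith) (by linarith)
      have h4 : Real.sin (αc - αb) = -Real.sin (αb - αc) := by
        rw [← Real.sin_neg]; ring_nf
      linarith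
    have hd1 : αc - αa = -Real.pi := by
      by_contra h
      have hlt1 : αc - αa < -Real.pi := by
        cases lt_or_gt_of_ne h with
        | inl h => exact h
        | inr h' =>
          exfalso
          have : αc - αa ≤ αc - αb := by linarith
          linarith
      have h2 : 0 < Real.sin (αc - αa + 2 * Real.pi) :=
        Real.sin_pos_of_pos_of_lt_pi (by linarith) (by linarith)
      have h3 : Real.sin (αc - αa + 2 * Real.pi) = Real.sin (αc - αa) := by
        rw [Real.sin_add_two_pi]
      linarith
    have heq : αa = αb := by
      have : αc - αb = -Real.pi + (αa - αb) := by linarith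
      have h2 : αa - αb ≤ 0 := by linarith [hd2, this]
      linarith
    exfalso
    have h1 := keycos αa
    rw [hd1] at h1
    simp [heq] at h1
    linarith
  · by_contra hlt
    push_neg at hlt
    -- αa < αc
    have hd1 : Real.pi ≤ αc - αa := by
      by_contra h
      push_neg at h
      have : 0 < Real.sin (αc - αa) :=
        Real.sin_pos_of_pos_of_lt_pi (by linarith) h
      linarith
    have hd2 : αc - αb = Real.pi := by
      by_contra h
      have hgt : Real.pi < αc - αb := lt_of_le_of_ne (by linarith) (Ne.symm h)
      have h2 : 0 < Real.sin (αc - αb - Real.pi) :=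
        Real.sin_pos_of_pos_of_lt_pi (by linarith) (by linarith)
      have h3 : Real.sin (αc - αb - Real.pi) = -Real.sin (αc - αb) := by
        rw [Real.sin_sub_pi]
      linarith
    have heq : αa = αb := by linarith
    exfalso
    have h1 := keycos αa
    have : αc - αa = Real.pi := by linarith
    rw [this] at h1
    simp [heq] at h1
    linarith

private lemma arg_add_between (a b : ℂ) (ha : a ≠ 0) (hb : b ≠ 0)
    (hba : b.arg ≤ a.arg) (hd : a.arg - b.arg < Real.pi) :
    a + b ≠ 0 ∧ b.arg ≤ (a + b).arg ∧ (a + b).arg ≤ a.arg := by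
  have pi_pos := Real.pi_pos
  have hab : a + b ≠ 0 := by
    intro h
    have hbna : b = -a := by linear_combination h
    rcases lt_trichotomy a.im 0 with him | him | him
    · rw [hbna, Complex.arg_neg_eq_arg_add_pi_of_im_neg him] at hba
      linarith
    · rcases lt_trichotomy a.re 0 with hre | hre | hre
      · have h1 : a.arg = Real.pi := Complex.arg_eq_pi_iff.mpr ⟨hre, him⟩
        have h2 : b.arg = 0 := Complex.arg_eq_zero_iff.mpr
          ⟨by rw [hbna]; simpa using hre.le, by rw [hbna]; simp [him]⟩
        rw [h1, h2] at hd
        simp at hd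
      · exact ha (Complex.ext (by simpa using hre) (by simpa using him))
      · have h1 : a.arg = 0 := Complex.arg_eq_zero_iff.mpr ⟨hre.le, him⟩
        have h2 : b.arg = Real.pi := Complex.arg_eq_pi_iff.mpr
          ⟨by rw [hbna]; simpa using hre, by rw [hbna]; simp [him]⟩
        rw [h1, h2] at hba
        linarith
    · rw [hbna, Complex.arg_neg_eq_arg_sub_pi_of_im_pos him] at hd
      linarith
  refine ⟨hab, ?_⟩
  have habs : ∀ w : ℂ, w ≠ 0 → w.re = ‖w‖ * Real.cos w.arg
      ∧ w.im = ‖w‖ * Real.sin w.arg := by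
    intro w hw
    have h0 : ‖w‖ ≠ 0 := norm_ne_zero_iff.mpr hw
    constructor
    · rw [Complex.cos_arg hw]; field_simp
    · rw [Complex.sin_arg]; field_simp
  obtain ⟨hare, haim⟩ := habs a ha
  obtain ⟨hbre, hbim⟩ := habs b hb
  obtain ⟨hcre, hcim⟩ := habs (a + b) hab
  have h := trig_between (‖a‖) (‖b‖) (‖a + b‖)
    a.arg b.arg (a + b).arg
    (norm_pos_iff.mpr ha) (norm_pos_iff.mpr hb) (norm_pos_iff.mpr hab)
    (Complex.neg_pi_lt_arg a) (Complex.arg_le_pi a)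
    (Complex.neg_pi_lt_arg b) (Complex.arg_le_pi b)
    (Complex.neg_pi_lt_arg (a + b)) (Complex.arg_le_pi (a + b))
    hba hd
    (by rw [← hcre, ← hare, ← hbre]; simp)
    (by rw [← hcim, ← haim, ← hbim]; simp)
  exact ⟨h.1, h.2⟩

private lemma sector_add (a b : ℂ) (ha : a ≠ 0) (hb : b ≠ 0) (s t : ℝ)
    (has : |a.arg| ≤ s) (hbt : |b.arg| ≤ t) (hst : s + t < Real.pi) :
    a + b ≠ 0 ∧ |(a + b).arg| ≤ max s t := by
  obtain ⟨has1, has2⟩ := abs_le.mp has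
  obtain ⟨hbt1, hbt2⟩ := abs_le.mp hbt
  rcases le_total b.arg a.arg with h | h
  · obtain ⟨h0, h1, h2⟩ := arg_add_between a b ha hb h (by linarith)
    exact ⟨h0, abs_le.mpr ⟨by
      calc -(max s t) ≤ -t := by simp
        _ ≤ b.arg := hbt1
        _ ≤ _ := h1, le_trans h2 (le_trans has2 (le_max_left s t))⟩⟩
  · obtain ⟨h0, h1, h2⟩ := arg_add_between b a hb ha h (by linarith)
    rw [add_comm] at h0 h1 h2
    exact ⟨h0, abs_le.mpr ⟨by
      calc -(max s t) ≤ -s := by simp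
        _ ≤ a.arg := has1
        _ ≤ _ := h1, le_trans h2 (le_trans hbt2 (le_max_right s t))⟩⟩

/-- Sector mapping property for homogeneous parameter-elliptic polynomials. -/
theorem sector_mapping_of_homogeneous {n m : ℕ} (P : MvPolynomial (Fin n) ℂ)
    (hm : 1 ≤ m) (hhom : P.IsHomogeneous m) (φP φV : ℝ)
    (hφP : φP ∈ Set.Ico 0 Real.pi) (hφV : φV ∈ Set.Ico 0 Real.pi)
    (hsum : φP + φV < Real.pi)
    (hPell : ∀ φ ∈ Set.Ioo φP Real.pi, ∀ z ∈ closedSector (Real.pi - φ),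
      ∀ ξ : EuclideanSpace ℝ (Fin n), ¬(z = 0 ∧ ξ = 0) →
        z + MvPolynomial.eval (fun i => (ξ i : ℂ)) P ≠ 0) :
    ∀ φ₀ : ℝ, max φP φV < φ₀ → φ₀ < Real.pi →
      ∃ φ : ℝ, φV < φ ∧
        ∀ ξ : EuclideanSpace ℝ (Fin n), ∀ z ∈ openSector (Real.pi - φ₀),
          z + MvPolynomial.eval (fun i => (ξ i : ℂ)) P ∈ openSector (Real.pi - φ) := by
  intro φ₀ hmax hφ₀π
  have pi_pos := Real.pi_pos
  obtain ⟨hφP0, hφPπ⟩ := hφP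
  obtain ⟨hφV0, hφVπ⟩ := hφV
  have hφPφ₀ : φP < φ₀ := lt_of_le_of_lt (le_max_left _ _) hmax
  have hφVφ₀ : φV < φ₀ := lt_of_le_of_lt (le_max_right _ _) hmax
  set c := min φ₀ (Real.pi - φP) with hcdef
  have hφVc : φV < c := lt_min hφVφ₀ (by linarith)
  refine ⟨(φV + c) / 2, by linarith, ?_⟩
  set φ := (φV + c) / 2 with hφdef
  have hφc : φ < c := by rw [hφdef]; linarith
  have hφφ₀ : φ < φ₀ := lt_of_lt_of_le hφc (min_le_left _ _)
  have hφπP : φ < Real.pi - φP := lt_of_lt_of_le hφc (min_le_right _ _)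
  have hφ0 : 0 ≤ φ := by rw [hφdef]; linarith
  have hφpos : 0 < Real.pi - φ := by linarith
  intro ξ z hz
  obtain ⟨hz0, hzarg⟩ := hz
  set Pz := MvPolynomial.eval (fun i => (ξ i : ℂ)) P with hPzdef
  show z + Pz ∈ openSector (Real.pi - φ)
  set w := z + Pz with hwdef
  simp only [openSector, Set.mem_setOf_eq]
  by_contra hcon
  push_neg at hcon
  by_cases hw0 : w = 0
  · exact hPell φ₀ ⟨hφPφ₀, hφ₀π⟩ z (Or.inl hzarg.le) ξ (fun h => hz0 h.1) hw0
  · have hwarg : Real.pi - φ ≤ |w.arg| := hcon hw0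
    set μ := -w with hμdef
    have hμ0 : μ ≠ 0 := neg_ne_zero.mpr hw0
    have hμarg : |μ.arg| ≤ φ := by
      rcases lt_trichotomy w.im 0 with him | him | him
      · have h1 : μ.arg = w.arg + Real.pi :=
          Complex.arg_neg_eq_arg_add_pi_of_im_neg him
        have h2 : w.arg < 0 := Complex.arg_neg_iff.mpr him
        have h3 : -Real.pi < w.arg := Complex.neg_pi_lt_arg w
        rw [abs_of_neg h2] at hwarg
        rw [h1]
        exact abs_le.mpr ⟨by linarith, by linarith⟩
      · rcases lt_trichotomy w.re 0 with hre | hre | hre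
        · have h2 : μ.arg = 0 := Complex.arg_eq_zero_iff.mpr
            ⟨by rw [hμdef]; simpa using hre.le, by rw [hμdef]; simp [him]⟩
          rw [h2]
          simpa using hφ0
        · exact absurd (Complex.ext (by simpa using hre) (by simpa using him)) hw0
        · have h1 : w.arg = 0 := Complex.arg_eq_zero_iff.mpr ⟨hre.le, him⟩
          rw [h1] at hwarg
          simp at hwarg
          linarith
      · have h1 : μ.arg = w.arg - Real.pi :=
          Complex.arg_neg_eq_arg_sub_pi_of_im_pos him
        have h2 : 0 ≤ w.arg := by
          by_contra h
          push_neg at h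
          have := Complex.arg_neg_iff.mp h
          linarith
        have h3 : w.arg ≤ Real.pi := Complex.arg_le_pi w
        rw [abs_of_nonneg h2] at hwarg
        rw [h1]
        exact abs_le.mpr ⟨by linarith, by linarith⟩
    obtain ⟨hzμ0, hzμarg⟩ := sector_add z μ hz0 hμ0 (Real.pi - φ₀) φ
      hzarg.le hμarg (by linarith)
    have hψ1 : Real.pi - max (Real.pi - φ₀) φ ∈ Set.Ioo φP Real.pi := by
      constructor
      · have : max (Real.pi - φ₀) φ < Real.pi - φP := max_lt (by linarith) hφπP
        linarith
      · have : 0 < max (Real.pi - φ₀) φ :=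
          lt_of_lt_of_le (by linarith : (0:ℝ) < Real.pi - φ₀) (le_max_left _ _)
        linarith
    have hne := hPell (Real.pi - max (Real.pi - φ₀) φ) hψ1 (z + μ)
      (Or.inl (by rw [sub_sub_cancel]; exact hzμarg)) ξ (fun h => hzμ0 h.1)
    apply hne
    rw [hμdef, hwdef]
    ring
end
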